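/- arXiv:math/0209384 — 4 statements merged into one kernel-verified Lean document; each statement's English description precedes it below -/
import Mathlib

section
/- Let m ≥ 2, let Q : (0,∞) → ℝ be a positive non-decreasing function with Q(t) = o(t²) as t → +∞ and liminf_{r→+∞} Q(r)·(log r)/r² < +∞. Let b : ℝ^m → ℝ be continuous with b(x) ≥ 1/Q(|x|) for all x with |x| > 0, and let f : ℝ → ℝ be continuous. Suppose u ∈ C²(ℝ^m) satisfies u* := sup_{ℝ^m} u < +∞ and Δu(x) ≥ b(x) f(u(x)) for every x in the set Ω_γ = {x ∈ ℝ^m : u(x) > γ}, for some γ < u*. Then f(u*) ≤ 0. -/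
set_option maxHeartbeats 1000000

open Filter Asymptotics Topology

section Aux

lemma oneDim_max {φ ψ : ℝ → ℝ} {c : ℝ} (hmax : ∀ t, φ t ≤ φ 0)
    (hφ : ∀ t, HasDerivAt φ (ψ t) t) (hψ : HasDerivAt ψ c 0) : c ≤ 0 := by
  by_contra h
  push_neg at h
  have hψ0 : ψ 0 = 0 := by
    have h1 : IsLocalMax φ 0 := Filter.Eventually.of_forall hmax
    have := h1.deriv_eq_zero
    rwa [(hφ 0).deriv] at this
  have h2 : ∀ᶠ t in 𝓝[>] (0:ℝ), 0 < ψ t := by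
    have hsub : 𝓝[>] (0:ℝ) ≤ 𝓝[≠] (0:ℝ) :=
      nhdsWithin_mono _ (fun x hx => ne_of_gt hx)
    have h3 := ((hasDerivAt_iff_tendsto_slope.1 hψ).mono_left hsub).eventually
      (eventually_gt_nhds (half_lt_self h))
    filter_upwards [h3, self_mem_nhdsWithin] with t ht ht'
    simp only [Set.mem_Ioi] at ht'
    have hslope : slope ψ 0 t = ψ t / t := by
      simp [slope, hψ0, div_eq_inv_mul]
    rw [hslope] at ht
    have : 0 < ψ t / t := lt_trans (half_pos h) ht
    exact (div_pos_iff.1 this).resolve_right (fun ⟨_, h2⟩ => absurd ht' (not_lt.2 h2.le)) |>.1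
  obtain ⟨w, hw, hsub⟩ := mem_nhdsGT_iff_exists_Ioo_subset.1 h2
  simp only [Set.mem_Ioi] at hw
  have smono : StrictMonoOn φ (Set.Icc 0 w) := by
    apply strictMonoOn_of_deriv_pos (convex_Icc 0 w)
    · exact fun t _ => (hφ t).continuousAt.continuousWithinAt
    · intro t ht
      rw [interior_Icc] at ht
      rw [(hφ t).deriv]
      exact hsub ht
  have : φ 0 < φ w := smono ⟨le_refl _, hw.le⟩ ⟨hw.le, le_refl _⟩ hw
  exact absurd (hmax w) (not_le.2 this)

lemma secondPartial_nonpos {m : ℕ} {v : EuclideanSpace ℝ (Fin m) → ℝ}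
    (hv : ContDiff ℝ 2 v) {x₀ : EuclideanSpace ℝ (Fin m)}
    (hmax : ∀ x, v x ≤ v x₀) (e : EuclideanSpace ℝ (Fin m)) :
    fderiv ℝ (fun y => fderiv ℝ v y e) x₀ e ≤ 0 := by
  have hvd : Differentiable ℝ v := hv.differentiable two_ne_zero
  have hfd : Differentiable ℝ (fderiv ℝ v) :=
    (hv.fderiv_right (m := 1) (le_refl 2)).differentiable one_ne_zero
  set L : ℝ → EuclideanSpace ℝ (Fin m) := fun t => x₀ + t • e with hLdef
  have hL : ∀ t, HasDerivAt L e t := by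
    intro t
    have := ((hasDerivAt_id t).smul_const e).const_add x₀
    rw [one_smul] at this
    exact this
  have hL0 : L 0 = x₀ := by simp [hLdef]
  set D := fderiv ℝ (fderiv ℝ v) x₀ with hD
  have hA : HasFDerivAt (fun y => fderiv ℝ v y e)
      ((ContinuousLinearMap.apply ℝ ℝ e).comp D) x₀ :=
    (ContinuousLinearMap.apply ℝ ℝ e).hasFDerivAt.comp x₀ (hfd x₀).hasFDerivAt
  have hφ : ∀ t, HasDerivAt (fun t => v (L t)) (fderiv ℝ v (L t) e) t := fun t =>
    (hvd (L t)).hasFDerivAt.comp_hasDerivAt t (hL t)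
  have hψ : HasDerivAt (fun t => fderiv ℝ v (L t) e)
      (((ContinuousLinearMap.apply ℝ ℝ e).comp D) e) 0 := by
    have := (hL0 ▸ hA).comp_hasDerivAt 0 (hL 0)
    simpa [Function.comp_def] using this
  have hmax' : ∀ t, v (L t) ≤ v (L 0) := fun t => hL0 ▸ hmax (L t)
  have := oneDim_max hmax' hφ hψ
  rw [hA.fderiv]
  exact this

end Aux

/-- The Laplacian on Euclidean space: the sum of the pure second partial derivatives. -/
noncomputable def euclideanLaplacian {m : ℕ} (u : EuclideanSpace ℝ (Fin m) → ℝ)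
    (x : EuclideanSpace ℝ (Fin m)) : ℝ :=
  ∑ i, fderiv ℝ (fun y => fderiv ℝ u y (EuclideanSpace.single i 1)) x (EuclideanSpace.single i 1)

noncomputable def gBar {m : ℕ} (x : EuclideanSpace ℝ (Fin m)) : ℝ :=
  Real.log (1 + ‖x‖ ^ 2)

lemma gBar_hasFDerivAt {m : ℕ} (x : EuclideanSpace ℝ (Fin m)) :
    HasFDerivAt gBar ((1 + ‖x‖ ^ 2)⁻¹ • ((2:ℕ) • innerSL ℝ x)) x := by
  have hden : (0:ℝ) < 1 + ‖x‖ ^ 2 := by positivity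
  have hn : HasFDerivAt (fun y : EuclideanSpace ℝ (Fin m) => 1 + ‖y‖ ^ 2)
      ((2:ℕ) • innerSL ℝ x) x := (hasStrictFDerivAt_norm_sq x).hasFDerivAt.const_add 1
  exact (Real.hasDerivAt_log hden.ne').comp_hasFDerivAt x hn

lemma gBar_fderiv_apply {m : ℕ} (y : EuclideanSpace ℝ (Fin m)) (i : Fin m) :
    fderiv ℝ gBar y (EuclideanSpace.single i 1) = 2 * y i / (1 + ‖y‖ ^ 2) := by
  rw [(gBar_hasFDerivAt y).fderiv]
  simp [real_inner_comm, EuclideanSpace.inner_single_left, EuclideanSpace.inner_single_right]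
  ring

lemma gBar_second {m : ℕ} (x : EuclideanSpace ℝ (Fin m)) (i : Fin m) :
    fderiv ℝ (fun y => fderiv ℝ gBar y (EuclideanSpace.single i 1)) x
      (EuclideanSpace.single i 1)
      = (2 * (1 + ‖x‖ ^ 2) - 4 * (x i) ^ 2) / (1 + ‖x‖ ^ 2) ^ 2 := by
  have hden : (0:ℝ) < 1 + ‖x‖ ^ 2 := by positivity
  have hfun : (fun y : EuclideanSpace ℝ (Fin m) => fderiv ℝ gBar y (EuclideanSpace.single i 1))
      = fun y => 2 * y i / (1 + ‖y‖ ^ 2) := funext fun y => gBar_fderiv_apply y i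
  rw [hfun]
  simp only [div_eq_mul_inv]
  have hnum : HasFDerivAt (fun y : EuclideanSpace ℝ (Fin m) => 2 * y i)
      ((2:ℝ) • (EuclideanSpace.proj (𝕜 := ℝ) i)) x :=
    (EuclideanSpace.proj (𝕜 := ℝ) i).hasFDerivAt.const_mul 2
  have hn : HasFDerivAt (fun y : EuclideanSpace ℝ (Fin m) => 1 + ‖y‖ ^ 2)
      ((2:ℕ) • innerSL ℝ x) x := (hasStrictFDerivAt_norm_sq x).hasFDerivAt.const_add 1
  have hinv : HasFDerivAt (fun y : EuclideanSpace ℝ (Fin m) => (1 + ‖y‖ ^ 2)⁻¹)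
      ((-((1 + ‖x‖ ^ 2) ^ 2)⁻¹) • ((2:ℕ) • innerSL ℝ x)) x :=
    (hasDerivAt_inv hden.ne').comp_hasFDerivAt x hn
  have hq : HasFDerivAt (fun y : EuclideanSpace ℝ (Fin m) => 2 * y i * (1 + ‖y‖ ^ 2)⁻¹) _ x :=
    hnum.mul hinv
  rw [hq.fderiv]
  have h1 : (EuclideanSpace.proj (𝕜 := ℝ) i) (EuclideanSpace.single i (1:ℝ)) = 1 := by simp
  simp [ContinuousLinearMap.smul_apply, real_inner_comm, EuclideanSpace.inner_single_left, EuclideanSpace.inner_single_right, h1]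
  field_simp
  ring

lemma norm_sq_eq_sum {m : ℕ} (x : EuclideanSpace ℝ (Fin m)) :
    ‖x‖ ^ 2 = ∑ i, (x i) ^ 2 := by
  rw [EuclideanSpace.norm_eq]
  rw [Real.sq_sqrt (by positivity)]
  simp [sq_abs]

lemma gBar_laplacian {m : ℕ} (x : EuclideanSpace ℝ (Fin m)) :
    euclideanLaplacian gBar x
      = 2 * m / (1 + ‖x‖ ^ 2) - 4 * ‖x‖ ^ 2 / (1 + ‖x‖ ^ 2) ^ 2 := by
  have hden : (0:ℝ) < 1 + ‖x‖ ^ 2 := by positivity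
  unfold euclideanLaplacian
  simp only [gBar_second]
  rw [← Finset.sum_div, Finset.sum_sub_distrib, Finset.sum_const, Finset.card_univ,
    Fintype.card_fin, ← Finset.mul_sum, ← norm_sq_eq_sum, nsmul_eq_mul]
  field_simp

lemma gBar_laplacian_le {m : ℕ} (x : EuclideanSpace ℝ (Fin m)) :
    euclideanLaplacian gBar x ≤ 2 * m / (1 + ‖x‖ ^ 2) := by
  rw [gBar_laplacian]
  have : (0:ℝ) ≤ 4 * ‖x‖ ^ 2 / (1 + ‖x‖ ^ 2) ^ 2 := by positivity
  linarith

theorem stmt0 {m : ℕ} (hm : 2 ≤ m) (Q : ℝ → ℝ)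
    (hQpos : ∀ t > (0:ℝ), 0 < Q t)
    (hQmono : ∀ s t : ℝ, 0 < s → s ≤ t → Q s ≤ Q t)
    (hQo : Q =o[atTop] fun t => t ^ 2)
    (hliminf : ∃ C : ℝ, ∃ᶠ r in atTop, Q r * Real.log r / r ^ 2 ≤ C)
    (b : EuclideanSpace ℝ (Fin m) → ℝ) (hb : Continuous b)
    (hbQ : ∀ x : EuclideanSpace ℝ (Fin m), 0 < ‖x‖ → 1 / Q ‖x‖ ≤ b x)
    (f : ℝ → ℝ) (hf : Continuous f)
    (u : EuclideanSpace ℝ (Fin m) → ℝ) (hu : ContDiff ℝ 2 u)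
    (hbdd : BddAbove (Set.range u))
    (γ : ℝ) (hγ : γ < ⨆ x, u x)
    (hineq : ∀ x : EuclideanSpace ℝ (Fin m), γ < u x →
      b x * f (u x) ≤ euclideanLaplacian u x) :
    f (⨆ x, u x) ≤ 0 := by
  by_contra hcon
  push_neg at hcon
  set s := ⨆ x, u x with hs
  have hle : ∀ x, u x ≤ s := fun x => le_ciSup hbdd x
  have hm0 : (0:ℝ) < m := by
    have : (0:ℕ) < m := by omega
    exact_mod_cast this
  -- continuity of f at s
  obtain ⟨δ₀, hδ₀, hδ₀'⟩ :=
    Metric.continuousAt_iff.1 (hf.continuousAt (x := s)) (f s / 2) (half_pos hcon)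
  set δ := min δ₀ (s - γ) with hδdef
  have hδ : 0 < δ := lt_min hδ₀ (sub_pos.2 hγ)
  have hδle : δ ≤ δ₀ := min_le_left _ _
  have hδγ : δ ≤ s - γ := min_le_right _ _
  have hfε : ∀ t, s - δ < t → t ≤ s → f s / 2 < f t := by
    intro t h1 h2
    have hd : dist t s < δ₀ := by
      rw [Real.dist_eq, abs_lt]
      constructor <;> [linarith; linarith]
    have h3 := hδ₀' hd
    rw [Real.dist_eq, abs_lt] at h3
    linarith [h3.1]
  -- the constant K
  obtain ⟨R₁, hR₁⟩ := eventually_atTop.1 (hQo.def one_pos)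
  set R₀ := max R₁ 1 with hR₀def
  set K := max 1 (Q R₀) with hKdef
  have hK1 : (1:ℝ) ≤ K := le_max_left _ _
  have hKpos : (0:ℝ) < K := lt_of_lt_of_le one_pos hK1
  have hR₀pos : (0:ℝ) < R₀ := lt_of_lt_of_le one_pos (le_max_right _ _)
  have hQK : ∀ r : ℝ, 0 < r → Q r ≤ K * (1 + r ^ 2) := by
    intro r hr
    rcases le_total r R₀ with h | h
    · have h1 : Q r ≤ Q R₀ := hQmono r R₀ hr h
      have h2 : Q R₀ ≤ K := le_max_right _ _
      nlinarith [sq_nonneg r]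
    · have h3 := hR₁ r (le_trans (le_max_left _ _) h)
      rw [one_mul, Real.norm_eq_abs, Real.norm_eq_abs] at h3
      have h4 : Q r ≤ |Q r| := le_abs_self _
      have h5 : |r ^ 2| = r ^ 2 := abs_of_nonneg (sq_nonneg r)
      nlinarith [sq_nonneg r]
  -- b at the origin
  have hQ1 : (0:ℝ) < Q 1 := hQpos 1 one_pos
  have hb0 : 1 / Q 1 ≤ b 0 := by
    have hnt : Nontrivial (EuclideanSpace ℝ (Fin m)) := by
      refine nontrivial_of_ne (EuclideanSpace.single (⟨0, by omega⟩ : Fin m) (1:ℝ)) 0 ?_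
      intro h
      have := congrArg norm h
      rw [EuclideanSpace.norm_single, norm_zero] at this
      norm_num at this
    haveI := hnt
    haveI := Module.punctured_nhds_neBot ℝ (EuclideanSpace ℝ (Fin m))
    apply ge_of_tendsto (hb.continuousAt.mono_left (nhdsWithin_le_nhds
      (s := {(0 : EuclideanSpace ℝ (Fin m))}ᶜ)))
    have hball : Metric.ball (0 : EuclideanSpace ℝ (Fin m)) 1 ∈
        𝓝[≠] (0 : EuclideanSpace ℝ (Fin m)) :=
      nhdsWithin_le_nhds (Metric.ball_mem_nhds _ one_pos)
    filter_upwards [hball, self_mem_nhdsWithin] with x hx hx'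
    have hxn : 0 < ‖x‖ := norm_pos_iff.2 hx'
    have hx1 : ‖x‖ ≤ 1 := by
      have := Metric.mem_ball.1 hx
      rw [dist_zero_right] at this
      exact this.le
    have h1 := hbQ x hxn
    have h2 : Q ‖x‖ ≤ Q 1 := hQmono _ _ hxn hx1
    have h3 : 0 < Q ‖x‖ := hQpos _ hxn
    calc 1 / Q 1 ≤ 1 / Q ‖x‖ := one_div_le_one_div_of_le h3 h2
      _ ≤ b x := h1
  -- a point with u y close to s
  obtain ⟨y, hy⟩ := exists_lt_of_lt_ciSup (show s - δ / 2 < s by linarith)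
  -- smoothness of gBar
  have hgcd : ContDiff ℝ 2 (gBar (m := m)) := by
    have h1 : ContDiff ℝ 2 (fun x : EuclideanSpace ℝ (Fin m) => 1 + ‖x‖ ^ 2) :=
      contDiff_const.add (contDiff_norm_sq ℝ)
    exact h1.log (fun x => by positivity)
  have hgd : Differentiable ℝ (gBar (m := m)) := hgcd.differentiable two_ne_zero
  have hgnonneg : ∀ x : EuclideanSpace ℝ (Fin m), 0 ≤ gBar x := fun x =>
    Real.log_nonneg (by nlinarith [sq_nonneg ‖x‖])
  -- choice of θ
  set θ := min (f s / (16 * m * K)) (δ / (2 * gBar y + 2)) with hθdef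
  have hθpos : 0 < θ := by
    apply lt_min
    · apply div_pos hcon
      positivity
    · apply div_pos hδ
      have := hgnonneg y
      linarith
  have hθ1 : θ ≤ f s / (16 * m * K) := min_le_left _ _
  have hθ2 : θ ≤ δ / (2 * gBar y + 2) := min_le_right _ _
  -- the perturbed function and its max
  set v : EuclideanSpace ℝ (Fin m) → ℝ := fun x => u x - θ * gBar x with hvdef
  have hvcd : ContDiff ℝ 2 v := hu.sub (contDiff_const.mul hgcd)
  have hgtop : Tendsto (gBar (m := m)) (cocompact _) atTop := by
    have h1 : Tendsto (fun x : EuclideanSpace ℝ (Fin m) => ‖x‖ ^ 2) (cocompact _) atTop :=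
      (tendsto_pow_atTop two_ne_zero).comp tendsto_norm_cocompact_atTop
    have h2 := tendsto_atTop_add_const_left _ 1 h1
    have h3 := Real.tendsto_log_atTop.comp h2
    exact h3
  have hvbot : Tendsto v (cocompact _) atBot := by
    apply tendsto_atBot_mono (fun x => show v x ≤ s - θ * gBar x by
      have := hle x
      simp only [hvdef]
      linarith)
    have h1 := hgtop.const_mul_atTop hθpos
    have h2 := tendsto_neg_atTop_atBot.comp h1
    have h3 := tendsto_atBot_add_const_left _ s h2
    simpa [Function.comp, sub_eq_add_neg] using h3
  obtain ⟨x₀, hx₀⟩ := hvcd.continuous.exists_forall_ge hvbot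
  -- u x₀ is close to s
  have hgy : θ * gBar y < δ / 2 := by
    have h2 : 0 ≤ gBar y := hgnonneg y
    have h3 := mul_le_mul_of_nonneg_right hθ2 h2
    have h4 : δ / (2 * gBar y + 2) * gBar y < δ / 2 := by
      rw [div_mul_eq_mul_div, div_lt_div_iff₀ (by linarith) two_pos]
      nlinarith
    linarith
  have hux₀ : s - δ < u x₀ := by
    have h1 : v y ≤ v x₀ := hx₀ y
    have h2 : 0 ≤ gBar x₀ := hgnonneg x₀
    simp only [hvdef] at h1
    nlinarith [hθpos.le]
  have hγu : γ < u x₀ := by linarith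
  have hfu : f s / 2 < f (u x₀) := hfε _ hux₀ (hle x₀)
  -- the key differential inequality at x₀
  have hsum : euclideanLaplacian u x₀ ≤ θ * euclideanLaplacian gBar x₀ := by
    have hfdu : Differentiable ℝ (fderiv ℝ u) :=
      (hu.fderiv_right (m := 1) (le_refl 2)).differentiable one_ne_zero
    have hfdg : Differentiable ℝ (fderiv ℝ (gBar (m := m))) :=
      (hgcd.fderiv_right (m := 1) (le_refl 2)).differentiable one_ne_zero
    have key : ∀ i : Fin m,
        fderiv ℝ (fun z => fderiv ℝ u z (EuclideanSpace.single i 1)) x₀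
            (EuclideanSpace.single i 1)
          - θ * fderiv ℝ (fun z => fderiv ℝ gBar z (EuclideanSpace.single i 1)) x₀
            (EuclideanSpace.single i 1) ≤ 0 := by
      intro i
      set e : EuclideanSpace ℝ (Fin m) := EuclideanSpace.single i (1:ℝ) with hedef
      have hveq : (fun z => fderiv ℝ u z e - θ * fderiv ℝ gBar z e)
          = fun z => fderiv ℝ v z e := by
        funext z
        have h1 : HasFDerivAt v (fderiv ℝ u z - θ • fderiv ℝ gBar z) z :=
          ((hu.differentiable two_ne_zero z).hasFDerivAt).sub
            (((hgd z).hasFDerivAt).const_mul θ)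
        rw [h1.fderiv]
        simp
      have hAu : HasFDerivAt (fun z => fderiv ℝ u z e)
          ((ContinuousLinearMap.apply ℝ ℝ e).comp (fderiv ℝ (fderiv ℝ u) x₀)) x₀ :=
        (ContinuousLinearMap.apply ℝ ℝ e).hasFDerivAt.comp x₀ (hfdu x₀).hasFDerivAt
      have hAg : HasFDerivAt (fun z => fderiv ℝ gBar z e)
          ((ContinuousLinearMap.apply ℝ ℝ e).comp (fderiv ℝ (fderiv ℝ (gBar (m := m))) x₀)) x₀ :=
        (ContinuousLinearMap.apply ℝ ℝ e).hasFDerivAt.comp x₀ (hfdg x₀).hasFDerivAt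
      have hcomb : HasFDerivAt (fun z => fderiv ℝ v z e)
          (((ContinuousLinearMap.apply ℝ ℝ e).comp (fderiv ℝ (fderiv ℝ u) x₀))
            - θ • ((ContinuousLinearMap.apply ℝ ℝ e).comp
              (fderiv ℝ (fderiv ℝ (gBar (m := m))) x₀))) x₀ := by
        have h2 : HasFDerivAt (fun z => fderiv ℝ u z e - θ * fderiv ℝ gBar z e) _ x₀ :=
          hAu.sub (hAg.const_mul θ)
        rwa [hveq] at h2
      have h0 := secondPartial_nonpos hvcd hx₀ e
      rw [hcomb.fderiv] at h0
      rw [hAu.fderiv, hAg.fderiv]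
      simpa using h0
    have h4 : ∑ i : Fin m,
        (fderiv ℝ (fun z => fderiv ℝ u z (EuclideanSpace.single i 1)) x₀
            (EuclideanSpace.single i 1)
          - θ * fderiv ℝ (fun z => fderiv ℝ gBar z (EuclideanSpace.single i 1)) x₀
            (EuclideanSpace.single i 1)) ≤ 0 :=
      Finset.sum_nonpos (fun i _ => key i)
    rw [Finset.sum_sub_distrib, ← Finset.mul_sum] at h4
    unfold euclideanLaplacian
    linarith
  -- conclude
  have hP : (0:ℝ) < 1 + ‖x₀‖ ^ 2 := by positivity
  have hlapg := gBar_laplacian_le x₀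
  have hmain := hineq x₀ hγu
  have hchain : b x₀ * f (u x₀) ≤ θ * (2 * m / (1 + ‖x₀‖ ^ 2)) := by
    have h5 := mul_le_mul_of_nonneg_left hlapg hθpos.le
    linarith
  have hθ1' : θ * (16 * m * K) ≤ f s := by
    rw [le_div_iff₀ (by positivity)] at hθ1
    exact hθ1
  have hchain' : b x₀ * f (u x₀) * (1 + ‖x₀‖ ^ 2) ≤ θ * (2 * m) := by
    have h5 := mul_le_mul_of_nonneg_right hchain hP.le
    have h6 : θ * (2 * m / (1 + ‖x₀‖ ^ 2)) * (1 + ‖x₀‖ ^ 2) = θ * (2 * m) := by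
      field_simp
    linarith
  rcases eq_or_lt_of_le (norm_nonneg x₀) with h0 | h0
  · -- x₀ = 0
    have hx0 : x₀ = 0 := norm_eq_zero.1 h0.symm
    have hQ1K : Q 1 ≤ 2 * K := by
      have := hQK 1 one_pos
      nlinarith
    have hbp : 0 < b 0 := lt_of_lt_of_le (by positivity) hb0
    have h7 : 1 ≤ b 0 * Q 1 := by
      rw [div_le_iff₀ hQ1] at hb0
      linarith
    rw [hx0] at hchain' hfu
    rw [norm_zero] at hchain'
    -- b 0 * f (u 0) ≥ (1/(2K)) * (f s / 2); θ * 2m ≤ f s/(8K)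
    nlinarith [mul_le_mul_of_nonneg_left hQ1K hbp.le,
      mul_le_mul_of_nonneg_left hfu.le hbp.le, hθpos, hcon, hKpos, hm0]
  · -- ‖x₀‖ > 0
    have hQp : 0 < Q ‖x₀‖ := hQpos _ h0
    have hbb := hbQ x₀ h0
    have hbp : 0 < b x₀ := lt_of_lt_of_le (by positivity) hbb
    have h7 : 1 ≤ b x₀ * Q ‖x₀‖ := by
      rw [div_le_iff₀ hQp] at hbb
      linarith
    have h8 := hQK ‖x₀‖ h0
    nlinarith [mul_le_mul_of_nonneg_left h8 hbp.le,
      mul_le_mul_of_nonneg_left hfu.le (mul_nonneg hbp.le hP.le),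
      hθpos, hcon, hKpos, hm0, mul_pos hbp hP]
end

section
/- Let m ≥ 2, let Q : (0,∞) → ℝ be a positive non-decreasing function with Q(t) = o(t²) as t → +∞. Let b : ℝ^m → ℝ be continuous with b(x) ≥ 1/Q(|x|) for all x with |x| > 0, and let f : ℝ → ℝ be continuous. Suppose u ∈ C²(ℝ^m) satisfies u* := sup_{ℝ^m} u < +∞ and Δu(x) ≥ b(x) f(u(x)) for every x in the set Ω_γ = {x ∈ ℝ^m : u(x) > γ}, for some γ < u*. If moreover liminf_{r→+∞} (Q(r)/r²) ∫_{B_r} |u|^p dx < +∞ for some p > 0, where B_r is the Euclidean ball of radius r centered at the origin, then f(u*) ≤ 0. -/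
open Filter Asymptotics

open Topology

section Stmt1Aux

variable {m : ℕ}

theorem Stmt1Aux.secondDirDeriv_nonpos_of_max {E : Type*} [NormedAddCommGroup E] [NormedSpace ℝ E]
    (g : E → ℝ) (hg : ContDiff ℝ 2 g) (z : E) (hmax : ∀ y, g y ≤ g z) (v : E) :
    fderiv ℝ (fun y => fderiv ℝ g y v) z v ≤ 0 := by
  by_contra hK
  push_neg at hK
  set ψ : E → ℝ := fun y => fderiv ℝ g y v with hψdef
  set K : ℝ := fderiv ℝ ψ z v with hKdef
  have gdiff : Differentiable ℝ g := hg.differentiable (by norm_num)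
  have hψc : ContDiff ℝ 1 ψ :=
    (hg.fderiv_right (le_refl 2)).clm_apply contDiff_const
  have hψdiff : Differentiable ℝ ψ := hψc.differentiable one_ne_zero
  have hline : ∀ t : ℝ, HasDerivAt (fun t : ℝ => z + t • v) v t := by
    intro t
    simpa using ((hasDerivAt_id t).smul_const v).const_add z
  set φ : ℝ → ℝ := fun t => g (z + t • v) with hφdef
  have hφ' : ∀ t : ℝ, HasDerivAt φ (ψ (z + t • v)) t := fun t =>
    ((gdiff (z + t • v)).hasFDerivAt).comp_hasDerivAt t (hline t)
  have hderivφ : deriv φ = fun t => ψ (z + t • v) := funext fun t => (hφ' t).deriv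
  have hψ'' : HasDerivAt (deriv φ) K 0 := by
    rw [hderivφ]
    have h := ((hψdiff (z + (0:ℝ) • v)).hasFDerivAt).comp_hasDerivAt 0 (hline 0)
    simp only [zero_smul, add_zero] at h; exact h
  have hloc : IsLocalMax φ 0 := Filter.Eventually.of_forall fun t => by
    simpa [hφdef] using hmax (z + t • v)
  have h0 : deriv φ 0 = 0 := hloc.deriv_eq_zero
  have hslope : Tendsto (slope (deriv φ) 0) (𝓝[≠] 0) (𝓝 K) :=
    hasDerivAt_iff_tendsto_slope.mp hψ''
  have hev : ∀ᶠ t in 𝓝[≠] (0:ℝ), 0 < slope (deriv φ) 0 t :=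
    hslope.eventually (eventually_gt_nhds hK)
  rw [eventually_nhdsWithin_iff] at hev
  rw [Metric.eventually_nhds_iff] at hev
  obtain ⟨δ, hδ, hev⟩ := hev
  have hpos : ∀ t : ℝ, t ∈ Set.Ioo (0:ℝ) δ → 0 < deriv φ t := by
    intro t ht
    have hne : t ≠ 0 := ne_of_gt ht.1
    have h1 : 0 < slope (deriv φ) 0 t := by
      apply hev _ hne
      simp [Real.dist_eq, abs_of_pos ht.1, ht.2]
    rw [slope_def_field, h0, sub_zero, sub_zero] at h1
    have := mul_pos h1 ht.1
    rwa [div_mul_cancel₀ _ (ne_of_gt ht.1)] at this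
  have hφcont : Continuous φ := hg.continuous.comp (by continuity)
  have hmono : StrictMonoOn φ (Set.Icc 0 δ) := by
    apply strictMonoOn_of_deriv_pos (convex_Icc 0 δ) hφcont.continuousOn
    intro t ht
    rw [interior_Icc] at ht
    exact hpos t ht
  have h1 : φ 0 < φ δ :=
    hmono ⟨le_rfl, hδ.le⟩ ⟨hδ.le, le_rfl⟩ hδ
  have h2 : φ δ ≤ φ 0 := by simpa [hφdef] using hmax (z + δ • v)
  exact absurd h1 (not_lt.mpr h2)

lemma Stmt1Aux.sum_sq_pos (y : EuclideanSpace ℝ (Fin m)) : 0 < 1 + ∑ j, y j ^ 2 := by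
  have : 0 ≤ ∑ j, y j ^ 2 := Finset.sum_nonneg fun j _ => sq_nonneg _
  linarith

lemma Stmt1Aux.sum_sq_eq_norm (y : EuclideanSpace ℝ (Fin m)) : ∑ j, y j ^ 2 = ‖y‖ ^ 2 := by
  rw [EuclideanSpace.norm_eq, Real.sq_sqrt (Finset.sum_nonneg fun j _ => sq_nonneg _)]
  congr 1; funext j; rw [Real.norm_eq_abs, sq_abs]

lemma Stmt1Aux.contDiff_logsum : ContDiff ℝ 2 (fun x : EuclideanSpace ℝ (Fin m) =>
    Real.log (1 + ∑ j, x j ^ 2)) := by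
  have hs : ContDiff ℝ 2 (fun x : EuclideanSpace ℝ (Fin m) => ∑ j, x j ^ 2) := by
    apply ContDiff.sum
    intro j _
    have h1 : ContDiff ℝ 2 (fun x : EuclideanSpace ℝ (Fin m) => x j) :=
      (EuclideanSpace.proj j : EuclideanSpace ℝ (Fin m) →L[ℝ] ℝ).contDiff
    exact h1.pow 2
  rw [contDiff_iff_contDiffAt]
  intro x
  exact (Real.contDiffAt_log.mpr (Stmt1Aux.sum_sq_pos x).ne').comp x ((contDiff_const.add hs).contDiffAt)

lemma Stmt1Aux.hasFDerivAt_sumsq (y : EuclideanSpace ℝ (Fin m)) :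
    HasFDerivAt (fun x : EuclideanSpace ℝ (Fin m) => ∑ j, x j ^ 2)
      (∑ j, (2 * y j) • (EuclideanSpace.proj j : EuclideanSpace ℝ (Fin m) →L[ℝ] ℝ)) y := by
  apply HasFDerivAt.fun_sum
  intro j _
  have h1 : HasFDerivAt (fun x : EuclideanSpace ℝ (Fin m) => x j)
      (EuclideanSpace.proj j : EuclideanSpace ℝ (Fin m) →L[ℝ] ℝ) y :=
    (EuclideanSpace.proj j : EuclideanSpace ℝ (Fin m) →L[ℝ] ℝ).hasFDerivAt
  have h2 := h1.mul h1
  have e1 : (fun x : EuclideanSpace ℝ (Fin m) => x j ^ 2)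
      = fun x : EuclideanSpace ℝ (Fin m) => x j * x j := by
    funext x; ring
  have e2 : (2 * y j) • (EuclideanSpace.proj j : EuclideanSpace ℝ (Fin m) →L[ℝ] ℝ)
      = y j • (EuclideanSpace.proj j : EuclideanSpace ℝ (Fin m) →L[ℝ] ℝ)
        + y j • (EuclideanSpace.proj j : EuclideanSpace ℝ (Fin m) →L[ℝ] ℝ) := by
    rw [two_mul, add_smul]
  rw [e1, e2]; exact h2

lemma Stmt1Aux.hasFDerivAt_logsum (y : EuclideanSpace ℝ (Fin m)) :
    HasFDerivAt (fun x : EuclideanSpace ℝ (Fin m) => Real.log (1 + ∑ j, x j ^ 2))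
      ((1 + ∑ j, y j ^ 2)⁻¹ •
        (∑ j, (2 * y j) • (EuclideanSpace.proj j : EuclideanSpace ℝ (Fin m) →L[ℝ] ℝ))) y :=
  (Real.hasDerivAt_log (Stmt1Aux.sum_sq_pos y).ne').comp_hasFDerivAt
    (f := fun x : EuclideanSpace ℝ (Fin m) => 1 + ∑ j, x j ^ 2) y
    ((Stmt1Aux.hasFDerivAt_sumsq y).const_add 1)

lemma Stmt1Aux.eval_single (y : EuclideanSpace ℝ (Fin m)) (i : Fin m) :
    ((1 + ∑ j, y j ^ 2)⁻¹ •
        (∑ j, (2 * y j) • (EuclideanSpace.proj j : EuclideanSpace ℝ (Fin m) →L[ℝ] ℝ)))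
      (EuclideanSpace.single i 1)
    = (1 + ∑ j, y j ^ 2)⁻¹ * (2 * y i) := by
  simp [ContinuousLinearMap.sum_apply, EuclideanSpace.single_apply, mul_ite,
    Finset.sum_ite_eq']

lemma Stmt1Aux.hasFDerivAt_psi (z : EuclideanSpace ℝ (Fin m)) (i : Fin m) :
    HasFDerivAt (fun y : EuclideanSpace ℝ (Fin m) => (1 + ∑ j, y j ^ 2)⁻¹ * (2 * y i))
      ((1 + ∑ j, z j ^ 2)⁻¹ •
          ((2:ℝ) • (EuclideanSpace.proj i : EuclideanSpace ℝ (Fin m) →L[ℝ] ℝ))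
        + (2 * z i) • ((-(((1 + ∑ j, z j ^ 2)) ^ 2)⁻¹) •
            (∑ j, (2 * z j) • (EuclideanSpace.proj j : EuclideanSpace ℝ (Fin m) →L[ℝ] ℝ)))) z := by
  have hinv : HasFDerivAt (fun y : EuclideanSpace ℝ (Fin m) => (1 + ∑ j, y j ^ 2)⁻¹)
      ((-(((1 + ∑ j, z j ^ 2)) ^ 2)⁻¹) •
        (∑ j, (2 * z j) • (EuclideanSpace.proj j : EuclideanSpace ℝ (Fin m) →L[ℝ] ℝ))) z :=
    (hasDerivAt_inv (Stmt1Aux.sum_sq_pos z).ne').comp_hasFDerivAt z ((Stmt1Aux.hasFDerivAt_sumsq z).const_add 1)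
  have hlin : HasFDerivAt (fun y : EuclideanSpace ℝ (Fin m) => 2 * y i)
      ((2:ℝ) • (EuclideanSpace.proj i : EuclideanSpace ℝ (Fin m) →L[ℝ] ℝ)) z := by
    have h1 : HasFDerivAt (fun x : EuclideanSpace ℝ (Fin m) => x i)
        (EuclideanSpace.proj i : EuclideanSpace ℝ (Fin m) →L[ℝ] ℝ) z :=
      (EuclideanSpace.proj i : EuclideanSpace ℝ (Fin m) →L[ℝ] ℝ).hasFDerivAt
    exact h1.const_mul (2:ℝ)
  exact hinv.mul hlin

lemma Stmt1Aux.fderiv_psi_eval (z : EuclideanSpace ℝ (Fin m)) (i : Fin m) :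
    fderiv ℝ (fun y : EuclideanSpace ℝ (Fin m) => (1 + ∑ j, y j ^ 2)⁻¹ * (2 * y i)) z
        (EuclideanSpace.single i 1)
    = (1 + ∑ j, z j ^ 2)⁻¹ * 2
      - (2 * z i) * ((((1 + ∑ j, z j ^ 2)) ^ 2)⁻¹ * (2 * z i)) := by
  rw [(Stmt1Aux.hasFDerivAt_psi z i).fderiv]
  simp only [ContinuousLinearMap.add_apply, ContinuousLinearMap.smul_apply,
    EuclideanSpace.single_apply, smul_eq_mul]
  rw [show ((∑ j, (2 * z j) • (EuclideanSpace.proj j : EuclideanSpace ℝ (Fin m) →L[ℝ] ℝ)))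
      (EuclideanSpace.single i 1) = 2 * z i from by
    simp [ContinuousLinearMap.sum_apply, EuclideanSpace.single_apply, mul_ite,
      Finset.sum_ite_eq']]
  simp
  ring

end Stmt1Aux

set_option maxHeartbeats 1600000 in
theorem stmt1 {m : ℕ} (hm : 2 ≤ m) (Q : ℝ → ℝ)
    (hQpos : ∀ t > (0:ℝ), 0 < Q t)
    (hQmono : ∀ s t : ℝ, 0 < s → s ≤ t → Q s ≤ Q t)
    (hQo : Q =o[atTop] fun t => t ^ 2)
    (b : EuclideanSpace ℝ (Fin m) → ℝ) (hb : Continuous b)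
    (hbQ : ∀ x : EuclideanSpace ℝ (Fin m), 0 < ‖x‖ → 1 / Q ‖x‖ ≤ b x)
    (f : ℝ → ℝ) (hf : Continuous f)
    (u : EuclideanSpace ℝ (Fin m) → ℝ) (hu : ContDiff ℝ 2 u)
    (hbdd : BddAbove (Set.range u))
    (γ : ℝ) (hγ : γ < ⨆ x, u x)
    (hineq : ∀ x : EuclideanSpace ℝ (Fin m), γ < u x →
      b x * f (u x) ≤ euclideanLaplacian u x)
    (p : ℝ) (hp : 0 < p)
    (hliminf : ∃ C : ℝ, ∃ᶠ r in atTop,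
      Q r / r ^ 2 * ∫ x in Metric.ball (0 : EuclideanSpace ℝ (Fin m)) r, |u x| ^ p ≤ C) :
    f (⨆ x, u x) ≤ 0 := by
  classical
  set us := ⨆ x, u x with hus
  by_contra hfneg
  push_neg at hfneg
  have hub : ∀ x, u x ≤ us := fun x => by rw [hus]; exact le_ciSup hbdd x
  set c := f us with hcdef
  have hcpos : 0 < c := hfneg
  -- continuity of f near us
  obtain ⟨δ, hδpos, hδ⟩ := Metric.continuousAt_iff.mp (hf.continuousAt (x := us)) (c/2)
    (by linarith)
  set d := min δ (us - γ) with hdd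
  have hdpos : 0 < d := lt_min hδpos (by linarith)
  set γ' := us - d/2 with hγ'def
  have hγ'us : γ' < us := by rw [hγ'def]; linarith
  have hγγ' : γ ≤ γ' := by
    have h1 : d ≤ us - γ := min_le_right _ _
    rw [hγ'def]; linarith
  have hfge : ∀ s : ℝ, γ' < s → s ≤ us → c/2 ≤ f s := by
    intro s h1 h2
    have hdδ : d ≤ δ := min_le_left _ _
    have hd1 : dist s us < δ := by
      rw [Real.dist_eq, abs_of_nonpos (by linarith)]
      rw [hγ'def] at h1
      linarith
    have h3 := hδ hd1
    rw [Real.dist_eq] at h3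
    have h4 := abs_lt.mp h3
    rw [← hcdef] at h4
    linarith [h4.1]
  obtain ⟨x0, hx0⟩ : ∃ x, γ' < u x := exists_lt_of_lt_ciSup (by rw [← hus]; exact hγ'us)
  -- Q is eventually small
  rw [Asymptotics.isLittleO_iff] at hQo
  have hmR : (2:ℝ) ≤ (m:ℝ) := by exact_mod_cast hm
  have hmpos : (0:ℝ) < (m:ℝ) := by linarith
  have hεpos : (0:ℝ) < c/(8*(m:ℝ)) := by positivity
  obtain ⟨R0, hR0⟩ := eventually_atTop.mp (hQo hεpos)
  set R := max R0 1 with hRdef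
  have hR1 : (1:ℝ) ≤ R := le_max_right _ _
  have hQR : ∀ t : ℝ, R ≤ t → Q t ≤ c/(8*(m:ℝ)) * t^2 := by
    intro t ht
    have h1 := hR0 t (le_trans (le_max_left _ _) ht)
    rw [Real.norm_eq_abs, Real.norm_eq_abs] at h1
    calc Q t ≤ |Q t| := le_abs_self _
      _ ≤ c/(8*(m:ℝ)) * |t^2| := h1
      _ = c/(8*(m:ℝ)) * t^2 := by rw [abs_of_nonneg (sq_nonneg t)]
  have hQRpos : 0 < Q R := hQpos R (by linarith)
  -- modified Q
  set Qt : ℝ → ℝ := fun r => Q (max r 1) with hQtdef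
  have hQtpos : ∀ r, 0 < Qt r := fun r =>
    hQpos _ (lt_of_lt_of_le one_pos (le_max_right r 1))
  -- b is bounded below by 1 / Qt ‖x‖ everywhere
  have hbQ' : ∀ x : EuclideanSpace ℝ (Fin m), 1 / Qt ‖x‖ ≤ b x := by
    intro x
    rcases eq_or_ne x 0 with rfl | hx
    · rw [norm_zero]
      have hQt0 : Qt 0 = Q 1 := by rw [hQtdef]; simp
      rw [hQt0]
      have hi : (0:ℕ) < m := by omega
      set i0 : Fin m := ⟨0, hi⟩
      have hnorm : ∀ n : ℕ,
          ‖(EuclideanSpace.single i0 ((1:ℝ)/(n+1)) : EuclideanSpace ℝ (Fin m))‖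
          = 1/(n+1) := by
        intro n
        rw [EuclideanSpace.norm_single, Real.norm_eq_abs,
          abs_of_pos (by positivity)]
      have hseq : Tendsto
          (fun n : ℕ => (EuclideanSpace.single i0 ((1:ℝ)/(n+1)) : EuclideanSpace ℝ (Fin m)))
          atTop (𝓝 0) := by
        rw [tendsto_zero_iff_norm_tendsto_zero]
        simp only [hnorm]
        exact tendsto_one_div_add_atTop_nhds_zero_nat
      have hblim : Tendsto
          (fun n : ℕ => b (EuclideanSpace.single i0 ((1:ℝ)/(n+1)) : EuclideanSpace ℝ (Fin m)))
          atTop (𝓝 (b 0)) := (hb.tendsto 0).comp hseq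
      apply ge_of_tendsto hblim
      apply Eventually.of_forall
      intro n
      have hpos : (0:ℝ) < 1/(n+1) := by positivity
      have h1 := hbQ (EuclideanSpace.single i0 ((1:ℝ)/(n+1)))
        (by rw [hnorm n]; exact hpos)
      rw [hnorm n] at h1
      have h2 : Q (1/(n+1)) ≤ Q 1 := hQmono _ _ hpos
        (by rw [div_le_one (by positivity)]; linarith)
      have h3 : 1/Q 1 ≤ 1/Q (1/(n+1)) :=
        one_div_le_one_div_of_le (hQpos _ hpos) h2
      exact le_trans h3 h1
    · have hx' : 0 < ‖x‖ := norm_pos_iff.mpr hx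
      have h1 : Q ‖x‖ ≤ Qt ‖x‖ := hQmono _ _ hx' (le_max_left _ _)
      exact le_trans (one_div_le_one_div_of_le (hQpos _ hx') h1) (hbQ x hx')
  -- constants
  set S0 := ∑ j, x0 j ^ 2 with hS0def
  have hS0nonneg : (0:ℝ) ≤ S0 := Finset.sum_nonneg fun j _ => sq_nonneg _
  set L0 := Real.log (1 + S0) with hL0def
  have hL0nonneg : 0 ≤ L0 := Real.log_nonneg (by linarith)
  set A := min 1 (min (c/(8*(m:ℝ)*Q R)) ((u x0 - γ')/(2*(L0+1)))) with hAdef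
  have hApos : 0 < A := lt_min one_pos (lt_min (by positivity)
    (div_pos (by linarith) (by linarith)))
  have hA1 : A ≤ 1 := min_le_left _ _
  have hA2 : A ≤ c/(8*(m:ℝ)*Q R) := le_trans (min_le_right _ _) (min_le_left _ _)
  have hA3 : A ≤ (u x0 - γ')/(2*(L0+1)) := le_trans (min_le_right _ _) (min_le_right _ _)
  -- key inequality
  have hkey : ∀ r : ℝ, 0 ≤ r → 4*A*(m:ℝ)*Qt r ≤ c*(1+r^2)/2 := by
    intro r hr
    rcases le_or_gt R r with h | h
    · have hmax : max r 1 = r := max_eq_left (le_trans hR1 h)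
      have h1 : Qt r ≤ c/(8*(m:ℝ))*r^2 := by
        rw [hQtdef]; simp only; rw [hmax]; exact hQR r h
      have hq := hQtpos r
      have h2 : 4*A*(m:ℝ)*Qt r ≤ 4*(m:ℝ)*Qt r := by
        have := mul_le_mul_of_nonneg_right hA1
          (show (0:ℝ) ≤ 4*(m:ℝ)*Qt r by positivity)
        linarith
      have h3 : 4*(m:ℝ)*Qt r ≤ 4*(m:ℝ)*(c/(8*(m:ℝ))*r^2) :=
        mul_le_mul_of_nonneg_left h1 (by positivity)
      have h4 : 4*(m:ℝ)*(c/(8*(m:ℝ))*r^2) = c*r^2/2 := by field_simp; ring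
      linarith
    · have hmaxle : max r 1 ≤ R := max_le h.le hR1
      have h1 : Qt r ≤ Q R :=
        hQmono _ _ (lt_of_lt_of_le one_pos (le_max_right r 1)) hmaxle
      have h2 : A * (8*(m:ℝ)*Q R) ≤ c := by
        rw [← le_div_iff₀ (by positivity)]; exact hA2
      have hq := hQtpos r
      have h3 : 4*A*(m:ℝ)*Qt r ≤ 4*A*(m:ℝ)*Q R :=
        mul_le_mul_of_nonneg_left h1 (by positivity)
      have h5 : 0 ≤ c*r^2 := mul_nonneg hcpos.le (sq_nonneg r)
      linarith
  -- the auxiliary function g and its max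
  set g : EuclideanSpace ℝ (Fin m) → ℝ :=
    fun x => u x - A * Real.log (1 + ∑ j, x j ^ 2) with hgdef
  have hg2 : ContDiff ℝ 2 g := hu.sub (contDiff_const.mul Stmt1Aux.contDiff_logsum)
  set T := (us - (u x0 - A * L0) + 1)/A with hTdef
  set R2 := max (‖x0‖ + 1) (Real.exp T) with hR2def
  have hR2pos : 0 < R2 := lt_of_lt_of_le (Real.exp_pos T) (le_max_right _ _)
  have hgx0 : g x0 = u x0 - A * L0 := by rw [hgdef, hL0def, hS0def]
  have hout : ∀ x : EuclideanSpace ℝ (Fin m), R2 ≤ ‖x‖ → g x ≤ g x0 - 1 := by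
    intro x hxR
    have hxpos : 0 < ‖x‖ := lt_of_lt_of_le hR2pos hxR
    have hTle : T ≤ Real.log (1 + ∑ j, x j ^ 2) := by
      rw [Stmt1Aux.sum_sq_eq_norm]
      have l1 : Real.exp T ≤ ‖x‖ := le_trans (le_max_right _ _) hxR
      have l2 : ‖x‖ ≤ 1 + ‖x‖^2 := by nlinarith [sq_nonneg (‖x‖ - 1)]
      calc T = Real.log (Real.exp T) := (Real.log_exp T).symm
        _ ≤ Real.log (1+‖x‖^2) := Real.log_le_log (Real.exp_pos T) (by linarith)
    have hAT : A * T = us - (u x0 - A*L0) + 1 := by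
      rw [hTdef, mul_div_cancel₀ _ hApos.ne']
    have h5 : A * T ≤ A * Real.log (1 + ∑ j, x j ^ 2) :=
      mul_le_mul_of_nonneg_left hTle hApos.le
    have h6 : g x = u x - A * Real.log (1 + ∑ j, x j ^ 2) := by rw [hgdef]
    rw [hgx0, h6]
    have := hub x
    linarith
  have hx0K : x0 ∈ Metric.closedBall (0:EuclideanSpace ℝ (Fin m)) R2 := by
    rw [Metric.mem_closedBall, dist_zero_right]
    linarith [le_max_left (‖x0‖+1) (Real.exp T)]
  obtain ⟨z, hzK, hzmax⟩ := (isCompact_closedBall (0:EuclideanSpace ℝ (Fin m)) R2).exists_isMaxOn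
    ⟨x0, hx0K⟩ (hg2.continuous.continuousOn)
  have hzglob : ∀ y, g y ≤ g z := by
    intro y
    rcases le_or_gt ‖y‖ R2 with h | h
    · exact hzmax (by rw [Metric.mem_closedBall, dist_zero_right]; exact h)
    · have h1 := hout y h.le
      have h2 : g x0 ≤ g z := hzmax hx0K
      linarith
  -- u z > γ'
  have hsumz : (0:ℝ) ≤ ∑ j, z j ^ 2 := Finset.sum_nonneg fun j _ => sq_nonneg _
  have hlogz : 0 ≤ Real.log (1 + ∑ j, z j ^ 2) := Real.log_nonneg (by linarith)
  have huzγ' : γ' < u z := by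
    have h1 : g x0 ≤ g z := hzglob x0
    have h2 : g z = u z - A * Real.log (1 + ∑ j, z j ^ 2) := by rw [hgdef]
    have h3 : A * (2*(L0+1)) ≤ u x0 - γ' := by
      rw [← le_div_iff₀ (by linarith)]; exact hA3
    have h4 : 0 ≤ A * Real.log (1 + ∑ j, z j ^ 2) := mul_nonneg hApos.le hlogz
    rw [hgx0] at h1
    linarith
  have huzγ : γ < u z := lt_of_le_of_lt hγγ' huzγ'
  -- second derivative test
  have hsec := fun v => Stmt1Aux.secondDirDeriv_nonpos_of_max g hg2 z hzglob v
  set S := ∑ j, z j ^ 2 with hSdef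
  have hSpos : 0 < 1 + S := Stmt1Aux.sum_sq_pos z
  -- Laplacian estimate
  have hstep : ∀ i : Fin m,
      fderiv ℝ (fun y => fderiv ℝ u y (EuclideanSpace.single i 1)) z
        (EuclideanSpace.single i 1) ≤ A * (2 * (1+S)⁻¹) := by
    intro i
    have hfeq : (fun y : EuclideanSpace ℝ (Fin m) =>
        fderiv ℝ u y (EuclideanSpace.single i 1))
        = fun y : EuclideanSpace ℝ (Fin m) =>
            fderiv ℝ g y (EuclideanSpace.single i 1)
            + A * ((1 + ∑ j, y j ^ 2)⁻¹ * (2 * y i)) := by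
      funext y
      have hgd : DifferentiableAt ℝ g y := (hg2.differentiable (by norm_num)) y
      have hc : HasFDerivAt
          (fun x : EuclideanSpace ℝ (Fin m) => A * Real.log (1 + ∑ j, x j ^ 2))
          (A • ((1 + ∑ j, y j ^ 2)⁻¹ •
            (∑ j, (2 * y j) • (EuclideanSpace.proj j : EuclideanSpace ℝ (Fin m) →L[ℝ] ℝ)))) y :=
        (Stmt1Aux.hasFDerivAt_logsum y).const_mul A
      have hsum : HasFDerivAt u
          (fderiv ℝ g y + A • ((1 + ∑ j, y j ^ 2)⁻¹ •
            (∑ j, (2 * y j) • (EuclideanSpace.proj j : EuclideanSpace ℝ (Fin m) →L[ℝ] ℝ)))) y := by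
        have h7 := hgd.hasFDerivAt.add hc
        have huu : (fun x : EuclideanSpace ℝ (Fin m) =>
            g x + A * Real.log (1 + ∑ j, x j ^ 2)) = u := by
          funext x; rw [hgdef]; ring
        rw [← huu]; exact h7
      rw [hsum.fderiv, ContinuousLinearMap.add_apply, ContinuousLinearMap.smul_apply,
        Stmt1Aux.eval_single]
      simp [smul_eq_mul]
    have hgC1 : DifferentiableAt ℝ
        (fun y : EuclideanSpace ℝ (Fin m) =>
          fderiv ℝ g y (EuclideanSpace.single i 1)) z := by
      have h8 : ContDiff ℝ 1 (fun y : EuclideanSpace ℝ (Fin m) =>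
          fderiv ℝ g y (EuclideanSpace.single i 1)) :=
        (hg2.fderiv_right (le_refl 2)).clm_apply contDiff_const
      exact (h8.differentiable one_ne_zero) z
    have hpsiD : DifferentiableAt ℝ
        (fun y : EuclideanSpace ℝ (Fin m) => (1 + ∑ j, y j ^ 2)⁻¹ * (2 * y i)) z :=
      (Stmt1Aux.hasFDerivAt_psi z i).differentiableAt
    have t2 : fderiv ℝ (fun y : EuclideanSpace ℝ (Fin m) =>
        A * ((1 + ∑ j, y j ^ 2)⁻¹ * (2 * y i))) z (EuclideanSpace.single i 1)
        = A * ((1+S)⁻¹ * 2 - (2 * z i) * (((1+S)^2)⁻¹ * (2 * z i))) := by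
      rw [fderiv_const_mul hpsiD A, ContinuousLinearMap.smul_apply, smul_eq_mul,
        Stmt1Aux.fderiv_psi_eval]
    rw [hfeq, fderiv_fun_add hgC1 (hpsiD.const_mul A), ContinuousLinearMap.add_apply]
    have t1 := hsec (EuclideanSpace.single i 1)
    have t3 : 0 ≤ (2 * z i) * (((1+S)^2)⁻¹ * (2 * z i)) := by
      have : (2 * z i) * (((1+S)^2)⁻¹ * (2 * z i)) = ((1+S)^2)⁻¹ * (2 * z i)^2 := by ring
      rw [this]; positivity
    have t4 : A * ((1+S)⁻¹ * 2 - (2 * z i) * (((1+S)^2)⁻¹ * (2 * z i)))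
        ≤ A * (2 * (1+S)⁻¹) := by
      have := mul_nonneg hApos.le t3
      nlinarith [this]
    rw [t2]  -- ⊢ fderiv g-part + A*(...) ≤ A*(2*(1+S)⁻¹)
    linarith
  have hlap : euclideanLaplacian u z ≤ 2*A*(m:ℝ)*(1+S)⁻¹ := by
    unfold euclideanLaplacian
    calc (∑ i, fderiv ℝ (fun y => fderiv ℝ u y (EuclideanSpace.single i 1)) z
          (EuclideanSpace.single i 1))
        ≤ ∑ _i : Fin m, A * (2 * (1+S)⁻¹) := Finset.sum_le_sum fun i _ => hstep i
      _ = (m:ℝ) * (A * (2 * (1+S)⁻¹)) := by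
          rw [Finset.sum_const, Finset.card_univ, Fintype.card_fin, nsmul_eq_mul]
      _ = 2*A*(m:ℝ)*(1+S)⁻¹ := by ring
  -- final contradiction
  have hfu : c/2 ≤ f (u z) := hfge (u z) huzγ' (hub z)
  have hbz : 1/Qt ‖z‖ ≤ b z := hbQ' z
  have hQtz := hQtpos ‖z‖
  have hlow : (1/Qt ‖z‖) * (c/2) ≤ euclideanLaplacian u z := by
    have h9 : (1/Qt ‖z‖) * (c/2) ≤ b z * f (u z) :=
      mul_le_mul hbz hfu (by linarith) (le_trans (by positivity) hbz)
    exact le_trans h9 (hineq z huzγ)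
  have h1 : (1/Qt ‖z‖) * (c/2) ≤ 2*A*(m:ℝ)*(1+S)⁻¹ := le_trans hlow hlap
  have hcontr : c/2*(1+S) ≤ 2*A*(m:ℝ)*Qt ‖z‖ := by
    have h2 := mul_le_mul_of_nonneg_left h1 (mul_pos hQtz hSpos).le
    have e1 : Qt ‖z‖*(1+S) * ((1/Qt ‖z‖)*(c/2)) = (1+S)*(c/2) := by
      field_simp
    have e2 : Qt ‖z‖*(1+S) * (2*A*(m:ℝ)*(1+S)⁻¹) = Qt ‖z‖*(2*A*(m:ℝ)) := by
      field_simp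
    rw [e1, e2] at h2
    linarith
  have hk := hkey ‖z‖ (norm_nonneg z)
  rw [← Stmt1Aux.sum_sq_eq_norm z, ← hSdef] at hk
  have hpos2 : 0 < 2*A*(m:ℝ)*Qt ‖z‖ := by positivity
  linarith
end

section
/- Let m ≥ 2, p ≥ 2, and let Q : (0,∞) → ℝ be a positive non-decreasing function with Q(t) = o(t^p) as t → +∞ and liminf_{r→+∞} Q(r)·(log r)/r^p < +∞. Let b : ℝ^m → ℝ be continuous with b(x) ≥ 1/Q(|x|) for |x| > 0, and let f : ℝ → ℝ be continuous. Suppose u ∈ C²(ℝ^m) satisfies u* := sup u < +∞ and div(|∇u|^{p-2}∇u)(x) ≥ b(x) f(u(x)) for every x in the set Ω_γ = {x ∈ ℝ^m : u(x) > γ}, for some γ < u*. Then f(u*) ≤ 0. -/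
open Filter Asymptotics Classical MeasureTheory intervalIntegral

/-- The divergence of a vector field on Euclidean space. -/
noncomputable def euclideanDiv {m : ℕ}
    (X : EuclideanSpace ℝ (Fin m) → EuclideanSpace ℝ (Fin m))
    (x : EuclideanSpace ℝ (Fin m)) : ℝ :=
  ∑ i, fderiv ℝ (fun y => X y i) x (EuclideanSpace.single i 1)

/-- The p-Laplacian on Euclidean space: the divergence of the vector field
`|∇u|^(p-2) ∇u`, extended by `0` at critical points of `u`. -/
noncomputable def pLaplacian {m : ℕ} (p : ℝ) (u : EuclideanSpace ℝ (Fin m) → ℝ)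
    (x : EuclideanSpace ℝ (Fin m)) : ℝ :=
  euclideanDiv (fun y => if gradient u y = 0 then 0 else
    ‖gradient u y‖ ^ (p - 2) • gradient u y) x

namespace PLapAux


section Basic

variable {m : ℕ}

local notation "E" => EuclideanSpace ℝ (Fin m)






lemma apply_eq_inner (x : E) (i : Fin m) :
    x i = inner ℝ x (EuclideanSpace.single i (1:ℝ)) := by
  rw [EuclideanSpace.inner_single_right]; simp

lemma hasFDerivAt_nmap (p : ℝ) (q : E) (hq : q ≠ 0) :
    HasFDerivAt (fun v : E => ‖v‖ ^ (p-2) • v)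
      (‖q‖ ^ (p-2) • ContinuousLinearMap.id ℝ E +
        ((p-2) * ‖q‖ ^ (p-4)) • (innerSL ℝ q).smulRight q) q := by
  have hn : (0:ℝ) < ‖q‖ := norm_pos_iff.2 hq
  have h1 : HasFDerivAt (fun v : E => ‖v‖ ^ 2) (2 • innerSL ℝ q) q := by
    simpa using (hasFDerivAt_id q).norm_sq
  have h2 : HasDerivAt (fun t : ℝ => t ^ ((p-2)/2))
      (((p-2)/2) * (‖q‖^2) ^ ((p-2)/2 - 1)) (‖q‖^2) :=
    Real.hasDerivAt_rpow_const (Or.inl (by positivity))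
  have h3 : HasFDerivAt (fun v : E => (‖v‖^2) ^ ((p-2)/2))
      ((((p-2)/2) * (‖q‖^2) ^ ((p-2)/2 - 1)) • (2 • innerSL ℝ q)) q := by
    have := h2.comp_hasFDerivAt q h1; exact this
  have hfe : (fun v : E => (‖v‖^2) ^ ((p-2)/2)) = fun v : E => ‖v‖ ^ (p-2) := by
    funext v
    rw [← Real.rpow_natCast ‖v‖ 2, ← Real.rpow_mul (norm_nonneg v)]
    congr 1; ring
  rw [hfe] at h3
  have h4 : HasFDerivAt (fun v : E => ‖v‖ ^ (p-2) • v) _ q := h3.smul (hasFDerivAt_id q)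
  refine h4.congr_fderiv ?_
  ext z
  have hsc : (‖q‖^2 : ℝ) ^ ((p-2)/2 - 1) = ‖q‖ ^ (p-4) := by
    rw [← Real.rpow_natCast ‖q‖ 2, ← Real.rpow_mul (norm_nonneg q)]
    ring_nf
  simp only [ContinuousLinearMap.add_apply, ContinuousLinearMap.smul_apply,
    ContinuousLinearMap.coe_id', id_eq, ContinuousLinearMap.smulRight_apply,
    innerSL_apply_apply, ContinuousLinearMap.coe_smul', Pi.smul_apply, hsc]
  simp only [PiLp.add_apply, PiLp.smul_apply, smul_eq_mul]
  ring

lemma euclideanDiv_nmap_comp (p : ℝ) (g : E → E) (Dg : E →L[ℝ] E) (x₀ : E)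
    (hg : HasFDerivAt g Dg x₀) (hq : g x₀ ≠ 0) :
    euclideanDiv (fun y => ‖g y‖ ^ (p-2) • g y) x₀ =
      ∑ i, (‖g x₀‖ ^ (p-2) * Dg (EuclideanSpace.single i 1) i +
        (p-2) * ‖g x₀‖ ^ (p-4) * inner ℝ (g x₀) (Dg (EuclideanSpace.single i 1)) * g x₀ i) := by
  have hN := (hasFDerivAt_nmap p (g x₀) hq).comp x₀ hg
  unfold euclideanDiv
  refine Finset.sum_congr rfl fun i _ => ?_
  have hcomp : HasFDerivAt (fun y => (‖g y‖ ^ (p-2) • g y) i)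
      ((EuclideanSpace.proj (𝕜 := ℝ) i).comp
        (((‖g x₀‖ ^ (p-2) • ContinuousLinearMap.id ℝ E +
          ((p-2) * ‖g x₀‖ ^ (p-4)) • (innerSL ℝ (g x₀)).smulRight (g x₀)).comp Dg))) x₀ :=
    (EuclideanSpace.proj (𝕜 := ℝ) i).hasFDerivAt.comp x₀ hN
  rw [hcomp.fderiv]
  simp only [ContinuousLinearMap.comp_apply, ContinuousLinearMap.add_apply,
    ContinuousLinearMap.smul_apply, ContinuousLinearMap.coe_id', id_eq,
    ContinuousLinearMap.smulRight_apply, innerSL_apply_apply]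
  have hpr : ∀ z : E, (EuclideanSpace.proj (𝕜 := ℝ) i) z = z i := fun z => rfl
  rw [hpr]
  simp only [PiLp.add_apply, PiLp.smul_apply, smul_eq_mul]
  ring


lemma key_compare (p : ℝ) (hp : 2 ≤ p) (g h : E → E) (Dg Dh : E →L[ℝ] E) (x₀ : E)
    (hgd : HasFDerivAt g Dg x₀) (hhd : HasFDerivAt h Dh x₀)
    (hgh : g x₀ = h x₀) (hq : g x₀ ≠ 0)
    (hsymg : ∀ w z : E, (inner ℝ (Dg w) z : ℝ) = inner ℝ (Dg z) w)
    (hsymh : ∀ w z : E, (inner ℝ (Dh w) z : ℝ) = inner ℝ (Dh z) w)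
    (hneg : ∀ w : E, (inner ℝ (Dg w) w : ℝ) ≤ inner ℝ (Dh w) w) :
    euclideanDiv (fun y => ‖g y‖ ^ (p-2) • g y) x₀ ≤
      euclideanDiv (fun y => ‖h y‖ ^ (p-2) • h y) x₀ := by
  rw [euclideanDiv_nmap_comp p g Dg x₀ hgd hq,
      euclideanDiv_nmap_comp p h Dh x₀ hhd (hgh ▸ hq), ← hgh]
  set q := g x₀ with hqdef
  have key2 : ∀ (D : E →L[ℝ] E), (∀ w z : E, (inner ℝ (D w) z : ℝ) = inner ℝ (D z) w) →
      ∑ i, (inner ℝ q (D (EuclideanSpace.single i 1)) : ℝ) * q i = inner ℝ (D q) q := by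
    intro D hsym
    have hterm : ∀ i : Fin m, (inner ℝ q (D (EuclideanSpace.single i 1)) : ℝ) = D q i := by
      intro i
      rw [real_inner_comm, hsym, ← apply_eq_inner]
    simp_rw [hterm]
    rw [PiLp.inner_apply]
    simp [RCLike.inner_apply, starRingEnd_apply, mul_comm]
  have hA : (0:ℝ) ≤ ‖q‖ ^ (p-2) := Real.rpow_nonneg (norm_nonneg q) _
  have hB : (0:ℝ) ≤ (p-2) * ‖q‖ ^ (p-4) :=
    mul_nonneg (by linarith) (Real.rpow_nonneg (norm_nonneg q) _)
  rw [Finset.sum_add_distrib, Finset.sum_add_distrib]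
  have h1 : ∑ i, ‖q‖ ^ (p-2) * Dg (EuclideanSpace.single i 1) i ≤
      ∑ i, ‖q‖ ^ (p-2) * Dh (EuclideanSpace.single i 1) i := by
    refine Finset.sum_le_sum fun i _ => mul_le_mul_of_nonneg_left ?_ hA
    rw [apply_eq_inner (Dg _) i, apply_eq_inner (Dh _) i]
    exact hneg _
  have h2 : ∑ i, (p-2) * ‖q‖ ^ (p-4) * inner ℝ q (Dg (EuclideanSpace.single i 1)) * q i ≤
      ∑ i, (p-2) * ‖q‖ ^ (p-4) * inner ℝ q (Dh (EuclideanSpace.single i 1)) * q i := by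
    simp_rw [mul_assoc ((p-2) * ‖q‖ ^ (p-4))]
    rw [← Finset.mul_sum, ← Finset.mul_sum]
    exact mul_le_mul_of_nonneg_left (by rw [key2 Dg hsymg, key2 Dh hsymh]; exact hneg q) hB
  linarith


end Basic

lemma second_deriv_test (φ ψ : ℝ → ℝ) (L : ℝ)
    (hφψ : ∀ᶠ t in nhds (0:ℝ), HasDerivAt φ (ψ t) t)
    (hψ : HasDerivAt ψ L 0) (hψ0 : ψ 0 = 0)
    (hmax : ∀ t, φ t ≤ φ 0) : L ≤ 0 := by
  by_contra hL
  push_neg at hL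
  have hslope := hasDerivAt_iff_tendsto_slope.1 hψ
  have hpos : ∀ᶠ t in nhdsWithin (0:ℝ) {(0:ℝ)}ᶜ, 0 < slope ψ 0 t :=
    hslope.eventually (eventually_gt_nhds hL)
  have hφψ' : ∀ᶠ t in nhdsWithin (0:ℝ) {(0:ℝ)}ᶜ, HasDerivAt φ (ψ t) t :=
    eventually_nhdsWithin_of_eventually_nhds hφψ
  obtain ⟨ε0, hε0, hball0⟩ := Metric.eventually_nhds_iff.1 hφψ
  obtain ⟨ε1, hε1, hball1⟩ := Metric.eventually_nhds_iff.1 (eventually_nhdsWithin_iff.1 (hpos.and hφψ'))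
  set ε := min ε0 ε1 / 2 with hε
  have hεpos : 0 < ε := by positivity
  have hε0' : ε < ε0 := by
    have := min_le_left ε0 ε1; linarith
  have hε1' : ε < ε1 := by
    have := min_le_right ε0 ε1; linarith
  have hcont : ContinuousOn φ (Set.Icc 0 ε) := by
    intro t ht
    refine (hball0 (y := t) ?_).continuousAt.continuousWithinAt
    simp only [Real.dist_eq, sub_zero]
    rw [abs_of_nonneg ht.1]
    exact lt_of_le_of_lt ht.2 hε0'
  have hmono : StrictMonoOn φ (Set.Icc 0 ε) := by
    refine strictMonoOn_of_deriv_pos (convex_Icc 0 ε) hcont ?_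
    intro t ht
    rw [interior_Icc] at ht
    have htne : t ≠ 0 := ne_of_gt ht.1
    have hdist : dist t (0:ℝ) < ε1 := by
      simp only [Real.dist_eq, sub_zero]
      rw [abs_of_pos ht.1]; linarith [ht.2]
    obtain ⟨hsl, hd⟩ := hball1 hdist (by simp [htne])
    rw [hd.deriv]
    have : slope ψ 0 t = ψ t / t := by simp [slope, hψ0, div_eq_inv_mul]
    rw [this] at hsl
    have := mul_pos hsl ht.1
    rwa [div_mul_cancel₀] at this
    exact htne
  have := hmono (Set.left_mem_Icc.2 hεpos.le) (Set.right_mem_Icc.2 hεpos.le) hεpos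
  exact absurd (hmax ε) (not_le.2 this)


section Dir
variable {m : ℕ}
local notation "E" => EuclideanSpace ℝ (Fin m)

noncomputable def innerRight (w : EuclideanSpace ℝ (Fin m)) :
    EuclideanSpace ℝ (Fin m) →L[ℝ] ℝ :=
  (ContinuousLinearMap.apply ℝ ℝ w).comp
    (InnerProductSpace.toDual ℝ (EuclideanSpace ℝ (Fin m))).toContinuousLinearEquiv.toContinuousLinearMap

lemma innerRight_apply (w v : E) : innerRight w v = inner ℝ v w := by
  simp [innerRight, ContinuousLinearMap.comp_apply, ContinuousLinearMap.apply_apply,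
    ContinuousLinearEquiv.coe_coe, LinearIsometryEquiv.coe_toContinuousLinearEquiv,
    InnerProductSpace.toDual_apply_apply]

lemma inner_fderiv_grad_symm (U : E → ℝ) (x₀ : E) (DU : E →L[ℝ] E)
    (hev : ∀ᶠ y in nhds x₀, DifferentiableAt ℝ U y)
    (hD : HasFDerivAt (gradient U) DU x₀) :
    ∀ w z : E, (inner ℝ (DU w) z : ℝ) = inner ℝ (DU z) w := by
  intro w z
  set T : E →L[ℝ] (E →L[ℝ] ℝ) :=
    (InnerProductSpace.toDual ℝ (EuclideanSpace ℝ (Fin m))).toContinuousLinearEquiv.toContinuousLinearMap with hT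
  have hf : ∀ᶠ y in nhds x₀, HasFDerivAt U (T (gradient U y)) y := by
    filter_upwards [hev] with y hy
    exact hy.hasGradientAt.hasFDerivAt
  have hx : HasFDerivAt (fun y => T (gradient U y)) (T.comp DU) x₀ :=
    T.hasFDerivAt.comp x₀ hD
  have hsym := second_derivative_symmetric_of_eventually_of_real hf hx w z
  simp only [ContinuousLinearMap.comp_apply, hT,
    ContinuousLinearEquiv.coe_coe, LinearIsometryEquiv.coe_toContinuousLinearEquiv] at hsym
  rw [InnerProductSpace.toDual_apply_apply, InnerProductSpace.toDual_apply_apply] at hsym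
  exact hsym

lemma grad_deriv_compare (U V : E → ℝ) (gU gV : E → E) (DU DV : E →L[ℝ] E) (x₀ : E)
    (hUg : ∀ᶠ y in nhds x₀, HasGradientAt U (gU y) y)
    (hVg : ∀ᶠ y in nhds x₀, HasGradientAt V (gV y) y)
    (hDU : HasFDerivAt gU DU x₀) (hDV : HasFDerivAt gV DV x₀)
    (heq : gU x₀ = gV x₀)
    (hmax : ∀ y, U y - V y ≤ U x₀ - V x₀) :
    ∀ w : E, (inner ℝ (DU w) w : ℝ) ≤ inner ℝ (DV w) w := by
  intro w
  set ℓ : ℝ → E := fun t => x₀ + t • w with hℓ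
  have hℓd : ∀ t : ℝ, HasDerivAt ℓ w t := by
    intro t
    simpa [hℓ] using ((hasDerivAt_id t).smul_const w).const_add x₀
  have hℓ0 : ℓ 0 = x₀ := by simp [hℓ]
  have hℓc : ContinuousAt ℓ 0 := (hℓd 0).continuousAt
  have hℓten : Tendsto ℓ (nhds 0) (nhds x₀) := hℓ0 ▸ hℓc.tendsto
  set ψ : ℝ → ℝ := fun t => inner ℝ (gU (ℓ t) - gV (ℓ t)) w with hψdef
  have hψd : HasDerivAt ψ (inner ℝ ((DU - DV) w) w : ℝ) 0 := by
    have h1 : HasFDerivAt (fun y => gU y - gV y) (DU - DV) x₀ := hDU.sub hDV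
    have h1' : HasFDerivAt (fun y => gU y - gV y) (DU - DV) (ℓ 0) := hℓ0 ▸ h1
    have h2 : HasDerivAt (fun t => gU (ℓ t) - gV (ℓ t)) ((DU - DV) w) 0 :=
      h1'.comp_hasDerivAt 0 (hℓd 0)
    have h3 := ((innerRight w).hasFDerivAt).comp_hasDerivAt 0 h2
    simp only [Function.comp_def, innerRight_apply] at h3
    exact h3
  have hψ0 : ψ 0 = 0 := by
    simp [hψdef, hℓ0, heq]
  have hφψ : ∀ᶠ t in nhds (0:ℝ), HasDerivAt (fun s => U (ℓ s) - V (ℓ s)) (ψ t) t := by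
    filter_upwards [hℓten.eventually (hUg.and hVg)] with t ⟨hU, hV⟩
    have hU' : HasDerivAt (fun s => U (ℓ s)) (inner ℝ (gU (ℓ t)) w : ℝ) t := by
      have := (hU.hasFDerivAt).comp_hasDerivAt t (hℓd t)
      simpa [Function.comp_def, InnerProductSpace.toDual_apply_apply] using this
    have hV' : HasDerivAt (fun s => V (ℓ s)) (inner ℝ (gV (ℓ t)) w : ℝ) t := by
      have := (hV.hasFDerivAt).comp_hasDerivAt t (hℓd t)
      simpa [Function.comp_def, InnerProductSpace.toDual_apply_apply] using this
    simpa [hψdef, inner_sub_left, Pi.sub_def] using hU'.sub hV'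
  have hL := second_deriv_test _ _ _ hφψ hψd hψ0 (fun t => by simpa [hℓ0] using hmax (ℓ t))
  rw [ContinuousLinearMap.sub_apply, inner_sub_left] at hL
  linarith


end Dir

lemma oneD_construction (m : ℕ) (hm : 1 ≤ m) (p : ℝ) (hp : 2 ≤ p)
    (Q : ℝ → ℝ) (hQpos : ∀ t > (0:ℝ), 0 < Q t)
    (hQmono : ∀ s t : ℝ, 0 < s → s ≤ t → Q s ≤ Q t)
    (hQo : Q =o[atTop] fun t => t ^ p)
    (δ : ℝ) (hδ : 0 < δ) (a : ℝ) (ha : 1 ≤ a) :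
    ∃ Q1 A W V : ℝ → ℝ,
      (∀ s, 0 < Q1 s) ∧
      (∀ s t : ℝ, 0 ≤ s → 0 < t → t ≤ s + a → Q t ≤ Q1 s) ∧
      (∀ r : ℝ, HasDerivAt A (δ * r^(m-1) / Q1 r) r) ∧
      (∀ r > (0:ℝ), 0 < A r) ∧
      Continuous W ∧
      (∀ s, 0 ≤ W s) ∧
      (∀ s > (0:ℝ), 0 < W s) ∧
      (∀ s > (0:ℝ), DifferentiableAt ℝ W s) ∧
      (∀ s > (0:ℝ), (W s) ^ (p-1) = A s / s^(m-1)) ∧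
      (∀ r : ℝ, HasDerivAt V (W r) r) ∧
      V 0 = 0 ∧ (∀ r, 0 ≤ V r) ∧
      (∀ ε > (0:ℝ), ∃ θ > (0:ℝ), ∀ s, 0 ≤ s → s < θ → V s ≤ ε * s) ∧
      Tendsto V atTop atTop := by
  have hp1 : (1:ℝ) < p - 1 + 1 := by linarith
  have hpm1 : (0:ℝ) < p - 1 := by linarith
  -- the monotone truncation of Q
  set Qm : ℝ → ℝ := fun t => Q (max t 1) with hQmdef
  have h1pos : ∀ t : ℝ, (0:ℝ) < max t 1 := fun t => lt_of_lt_of_le one_pos (le_max_right _ _)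
  have hQmmono : Monotone Qm := fun s t hst =>
    hQmono _ _ (h1pos s) (max_le_max hst le_rfl)
  have hQmpos : ∀ t, 0 < Qm t := fun t => hQpos _ (h1pos t)
  have hQmint : ∀ x y : ℝ, IntervalIntegrable Qm volume x y := fun x y =>
    hQmmono.intervalIntegrable
  -- the continuous monotone majorant
  set Q1 : ℝ → ℝ := fun s => ∫ t in (s+a)..(s+a+1), Qm t with hQ1def
  have hQ1rep : ∀ s : ℝ, Q1 s = ∫ t in (0:ℝ)..1, Qm ((s+a) + t) := by
    intro s
    rw [hQ1def]
    simp only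
    rw [integral_comp_add_left Qm (s+a)]
    norm_num
  have hQ1ge : ∀ s t0 : ℝ, (∀ t ∈ Set.Icc (s+a) (s+a+1), t0 ≤ Qm t) → t0 ≤ Q1 s := by
    intro s t0 hbd
    have : (t0:ℝ) = ∫ _ in (s+a)..(s+a+1), t0 := by
      rw [intervalIntegral.integral_const]; simp
    rw [this]
    exact integral_mono_on (by linarith) (intervalIntegrable_const) (hQmint _ _) hbd
  have hQ1le : ∀ s : ℝ, Q1 s ≤ Qm (s+a+1) := by
    intro s
    have : Qm (s+a+1) = ∫ _ in (s+a)..(s+a+1), Qm (s+a+1) := by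
      rw [intervalIntegral.integral_const]; simp
    rw [this]
    exact integral_mono_on (by linarith) (hQmint _ _) intervalIntegrable_const
      (fun t ht => hQmmono ht.2)
  have hQ1pos : ∀ s, 0 < Q1 s := by
    intro s
    have := hQ1ge s (Qm (s+a)) (fun t ht => hQmmono ht.1)
    exact lt_of_lt_of_le (hQmpos _) this
  have hQ1mono : Monotone Q1 := by
    intro s s' hss'
    rw [hQ1rep s, hQ1rep s']
    refine integral_mono_on (by norm_num) ?_ ?_ (fun t _ => hQmmono (by linarith))
    · exact (hQmmono.comp (by intro x y hxy; simp only; linarith : Monotone fun t : ℝ => s + a + t)).intervalIntegrable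
    · exact (hQmmono.comp (by intro x y hxy; simp only; linarith : Monotone fun t : ℝ => s' + a + t)).intervalIntegrable
  have hQ1cont : Continuous Q1 := by
    have hF : Continuous (fun x : ℝ => ∫ t in (0:ℝ)..x, Qm t) :=
      continuous_primitive (fun x y => hQmint x y) 0
    have : Q1 = fun s => (∫ t in (0:ℝ)..(s+a+1), Qm t) - ∫ t in (0:ℝ)..(s+a), Qm t := by
      funext s
      rw [integral_interval_sub_left (hQmint 0 (s+a+1)) (hQmint 0 (s+a))]
    rw [this]
    exact (hF.comp (by fun_prop)).sub (hF.comp (by fun_prop))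
  have hQ1bQ : ∀ s t : ℝ, 0 ≤ s → 0 < t → t ≤ s + a → Q t ≤ Q1 s := by
    intro s t hs ht hta
    have h1 : Q t ≤ Qm (s + a) := by
      rw [hQmdef]
      simp only
      exact hQmono t _ ht (le_max_of_le_left hta)
    exact le_trans h1 (hQ1ge s _ (fun t' ht' => hQmmono ht'.1))
  -- the function A
  set fA : ℝ → ℝ := fun s => δ * s^(m-1) / Q1 s with hfAdef
  have hfAcont : Continuous fA :=
    Continuous.div (by fun_prop) hQ1cont (fun s => (hQ1pos s).ne')
  set A : ℝ → ℝ := fun r => ∫ s in (0:ℝ)..r, fA s with hAdef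
  have hfAint : ∀ x y : ℝ, IntervalIntegrable fA volume x y := fun x y =>
    hfAcont.intervalIntegrable x y
  have hAderiv : ∀ r : ℝ, HasDerivAt A (fA r) r := fun r =>
    integral_hasDerivAt_right (hfAint 0 r) (hfAcont.stronglyMeasurableAtFilter _ _)
      hfAcont.continuousAt
  have hfAnonneg : ∀ s : ℝ, 0 ≤ s → 0 ≤ fA s := fun s hs =>
    div_nonneg (by positivity) (hQ1pos s).le
  have hApos : ∀ r > (0:ℝ), 0 < A r := by
    intro r hr
    refine intervalIntegral_pos_of_pos_on (hfAint 0 r) ?_ hr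
    intro x hx
    have hx1 : (0:ℝ) < x ^ (m-1) := pow_pos hx.1 _
    have := hQ1pos x
    rw [hfAdef]
    positivity
  have hAnonneg : ∀ r, 0 ≤ r → 0 ≤ A r := fun r hr =>
    intervalIntegral.integral_nonneg hr (fun u hu => hfAnonneg u hu.1)
  have hAbound : ∀ t > (0:ℝ), A t ≤ δ * t^(m-1) * t / Q 1 := by
    intro t ht
    have hb : ∀ x ∈ Set.Icc (0:ℝ) t, fA x ≤ δ * t^(m-1) / Q 1 := by
      intro x hx
      have h1 : x^(m-1) ≤ t^(m-1) := pow_le_pow_left₀ hx.1 hx.2 _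
      have h2 : Q 1 ≤ Q1 x := hQ1bQ x 1 hx.1 one_pos (by have := hx.1; linarith)
      exact div_le_div₀ (by positivity) (by nlinarith) (hQpos 1 one_pos) h2
    calc A t ≤ ∫ _ in (0:ℝ)..t, (δ * t^(m-1)/Q 1) :=
          integral_mono_on ht.le (hfAint 0 t) intervalIntegrable_const hb
    _ = δ * t^(m-1)/Q 1 * t := by rw [intervalIntegral.integral_const]; simp [mul_comm]
    _ = δ * t^(m-1) * t / Q 1 := by ring
  -- the function W
  set G : ℝ → ℝ := fun s => A s / s^(m-1) with hGdef
  have hGpos : ∀ s > (0:ℝ), 0 < G s := fun s hs => div_pos (hApos s hs) (pow_pos hs _)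
  set W : ℝ → ℝ := fun s => if s ≤ 0 then 0 else (G s) ^ ((p-1)⁻¹) with hWdef
  have hWnonneg : ∀ s, 0 ≤ W s := by
    intro s
    rw [hWdef]
    dsimp only
    split_ifs with h
    · exact le_rfl
    · exact Real.rpow_nonneg
        (div_nonneg (hAnonneg s (le_of_not_ge h)) (pow_nonneg (le_of_not_ge h) _)) _
  have hWeq : ∀ s, 0 < s → W s = (G s) ^ ((p-1)⁻¹) := fun s hs => if_neg (not_le.2 hs)
  have hWpos : ∀ s > (0:ℝ), 0 < W s := by
    intro s hs
    rw [hWeq s hs]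
    exact Real.rpow_pos_of_pos (hGpos s hs) _
  have hWpow : ∀ s > (0:ℝ), (W s)^(p-1) = A s / s^(m-1) := by
    intro s hs
    rw [hWeq s hs, ← Real.rpow_mul (hGpos s hs).le, inv_mul_cancel₀ hpm1.ne', Real.rpow_one]
  -- the upper bound function β
  set β : ℝ → ℝ := fun t => (δ * max t 0 / Q 1) ^ ((p-1)⁻¹) with hβdef
  have hβbase : ∀ t : ℝ, 0 ≤ δ * max t 0 / Q 1 := fun t =>
    div_nonneg (mul_nonneg hδ.le (le_max_right t 0)) (hQpos 1 one_pos).le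
  have hβnonneg : ∀ t, 0 ≤ β t := fun t => Real.rpow_nonneg (hβbase t) _
  have hβmono : ∀ t s : ℝ, t ≤ s → β t ≤ β s := by
    intro t s hts
    apply Real.rpow_le_rpow (hβbase t) ?_ (by positivity)
    have h2 : max t 0 ≤ max s 0 := max_le_max hts le_rfl
    have h3 := hQpos 1 one_pos
    rw [div_le_div_iff₀ h3 h3]
    have := mul_le_mul_of_nonneg_right (mul_le_mul_of_nonneg_left h2 hδ.le) h3.le
    linarith
  have hWleβ : ∀ t, W t ≤ β t := by
    intro t
    rcases le_or_gt t 0 with ht|ht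
    · rw [hWdef]; dsimp only; rw [if_pos ht]; exact hβnonneg t
    · rw [hWeq t ht, hβdef]
      dsimp only
      rw [max_eq_left ht.le]
      apply Real.rpow_le_rpow (hGpos t ht).le ?_ (by positivity)
      rw [hGdef]
      dsimp only
      rw [div_le_div_iff₀ (pow_pos ht (m-1)) (hQpos 1 one_pos)]
      have h4 := hAbound t ht
      rw [le_div_iff₀ (hQpos 1 one_pos)] at h4
      linear_combination h4
  have hβcont0 : ContinuousAt β 0 := by
    have hbase : ContinuousAt (fun t : ℝ => δ * max t 0 / Q 1) 0 := by fun_prop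
    have hg : ContinuousAt (fun x : ℝ => x ^ ((p-1)⁻¹)) ((fun t : ℝ => δ * max t 0 / Q 1) 0) :=
      Real.continuousAt_rpow_const _ _ (Or.inr (by positivity))
    exact ContinuousAt.comp (g := fun x : ℝ => x ^ ((p-1)⁻¹))
      (f := fun t : ℝ => δ * max t 0 / Q 1) (x := (0:ℝ)) hg hbase
  have hβ0 : β 0 = 0 := by
    rw [hβdef]
    dsimp only
    rw [max_self, mul_zero, zero_div, Real.zero_rpow (by positivity : (0:ℝ) < (p-1)⁻¹).ne']
  have hGcontAt : ∀ s : ℝ, s ≠ 0 → ContinuousAt G s := by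
    intro s hs
    exact ((hAderiv s).differentiableAt.continuousAt).div (by fun_prop) (pow_ne_zero _ hs)
  have hWcont : Continuous W := by
    rw [continuous_iff_continuousAt]
    intro s
    rcases lt_trichotomy s 0 with hs|hs|hs
    · have hev : W =ᶠ[nhds s] (fun _ => (0:ℝ)) := by
        filter_upwards [Iio_mem_nhds hs] with t ht
        rw [hWdef]; dsimp only; rw [if_pos (le_of_lt ht)]
      exact ContinuousAt.congr continuousAt_const hev.symm
    · subst hs
      have hW0 : W 0 = 0 := by rw [hWdef]; dsimp only; rw [if_pos le_rfl]
      have htd : Filter.Tendsto W (nhds 0) (nhds 0) := by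
        apply squeeze_zero hWnonneg hWleβ
        have := hβcont0.tendsto
        rwa [hβ0] at this
      rw [ContinuousAt, hW0]
      exact htd
    · have hev : W =ᶠ[nhds s] (fun t => (G t) ^ ((p-1)⁻¹)) := by
        filter_upwards [Ioi_mem_nhds hs] with t ht
        rw [hWdef]; dsimp only; rw [if_neg (not_le.2 ht)]
      refine ContinuousAt.congr ?_ hev.symm
      have hg : ContinuousAt (fun x : ℝ => x ^ ((p-1)⁻¹)) (G s) :=
        Real.continuousAt_rpow_const _ _ (Or.inl (hGpos s hs).ne')
      exact ContinuousAt.comp (g := fun x : ℝ => x ^ ((p-1)⁻¹)) (f := G) (x := s) hg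
        (hGcontAt s hs.ne')
  have hWdiffAt : ∀ s, 0 < s → DifferentiableAt ℝ W s := by
    intro s hs
    have hev : (fun t => (G t) ^ ((p-1)⁻¹)) =ᶠ[nhds s] W := by
      filter_upwards [Ioi_mem_nhds hs] with t ht
      rw [hWdef]; dsimp only; rw [if_neg (not_le.2 ht)]
    have hGd : DifferentiableAt ℝ G s :=
      ((hAderiv s).differentiableAt).div (by fun_prop) (pow_ne_zero _ hs.ne')
    have hrpow := Real.hasDerivAt_rpow_const (x := G s) (p := (p-1)⁻¹)
      (Or.inl (hGpos s hs).ne')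
    have hd : DifferentiableAt ℝ (fun t => (G t) ^ ((p-1)⁻¹)) s :=
      (hrpow.comp s hGd.hasDerivAt).differentiableAt
    exact (Filter.EventuallyEq.differentiableAt_iff hev).1 hd
  -- the function V
  set V : ℝ → ℝ := fun r => ∫ s in (0:ℝ)..r, W s with hVdef
  have hWint : ∀ x y : ℝ, IntervalIntegrable W volume x y := fun x y =>
    hWcont.intervalIntegrable x y
  have hVderiv : ∀ r : ℝ, HasDerivAt V (W r) r := fun r =>
    integral_hasDerivAt_right (hWint 0 r) (hWcont.stronglyMeasurableAtFilter _ _)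
      hWcont.continuousAt
  have hV0 : V 0 = 0 := integral_same
  have hVnonneg : ∀ r, 0 ≤ V r := by
    intro r
    rcases le_or_gt 0 r with hr|hr
    · exact intervalIntegral.integral_nonneg hr (fun u _ => hWnonneg u)
    · have hVr : V r = - ∫ s in r..(0:ℝ), W s := by
        rw [hVdef]; dsimp only; rw [integral_symm]
      have hz : ∫ s in r..(0:ℝ), W s = ∫ s in r..(0:ℝ), (0:ℝ) := by
        apply integral_congr
        intro t ht
        have ht' : t ≤ 0 := by
          rcases Set.mem_uIcc.1 ht with h|h
          · exact h.2
          · linarith [h.2, hr]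
        rw [hWdef]; dsimp only; rw [if_pos ht']
      rw [hVr, hz]
      simp
  have hVbound : ∀ s : ℝ, 0 ≤ s → V s ≤ s * β s := by
    intro s hs
    calc V s ≤ ∫ _ in (0:ℝ)..s, β s := integral_mono_on hs (hWint 0 s) intervalIntegrable_const
          (fun t ht => (hWleβ t).trans (hβmono t s ht.2))
    _ = s * β s := by rw [intervalIntegral.integral_const]; simp [mul_comm]
  have hVsmall : ∀ ε > (0:ℝ), ∃ θ > (0:ℝ), ∀ s, 0 ≤ s → s < θ → V s ≤ ε * s := by
    intro ε hε
    have htd : Filter.Tendsto β (nhds 0) (nhds 0) := by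
      have := hβcont0.tendsto
      rwa [hβ0] at this
    have hev : ∀ᶠ t in nhds (0:ℝ), β t < ε := htd.eventually_lt_const hε
    obtain ⟨θ, hθ, hball⟩ := Metric.eventually_nhds_iff.1 hev
    refine ⟨θ, hθ, fun s hs hsθ => ?_⟩
    have hβs : β s < ε := hball (by rw [Real.dist_eq, sub_zero, abs_of_nonneg hs]; exact hsθ)
    calc V s ≤ s * β s := hVbound s hs
    _ ≤ s * ε := mul_le_mul_of_nonneg_left hβs.le hs
    _ = ε * s := mul_comm _ _
  -- growth of Q1 at infinity
  obtain ⟨t₀, ht₀⟩ := eventually_atTop.1 (hQo.def one_pos)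
  set s₁ : ℝ := max (max t₀ (a+1)) 1 with hs₁def
  have hs₁pos : (0:ℝ) < s₁ := lt_of_lt_of_le one_pos (le_max_right _ _)
  have hs₁a : a + 1 ≤ s₁ := le_trans (le_max_right t₀ (a+1)) (le_max_left _ 1)
  have hs₁t₀ : t₀ ≤ s₁ := le_trans (le_max_left t₀ (a+1)) (le_max_left _ 1)
  have h2p : 0 < (2:ℝ)^p := Real.rpow_pos_of_pos two_pos p
  have hQ1growth : ∀ s, s₁ ≤ s → Q1 s ≤ 2^p * s^p := by
    intro s hs
    have hs0 : 0 < s := lt_of_lt_of_le hs₁pos hs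
    have h1 : Q1 s ≤ Qm (s + a + 1) := hQ1le s
    have h2 : Qm (s+a+1) = Q (s+a+1) := by
      rw [hQmdef]; dsimp only; rw [max_eq_left (by linarith)]
    have h4 := ht₀ (s+a+1) (by linarith)
    have h5 : ‖(s+a+1:ℝ) ^ p‖ = (s+a+1)^p := by
      rw [Real.norm_eq_abs, abs_of_pos (Real.rpow_pos_of_pos (by linarith) _)]
    have h6 : (s+a+1:ℝ)^p ≤ (2*s)^p :=
      Real.rpow_le_rpow (by linarith) (by linarith) (by linarith)
    have h7 : ((2:ℝ)*s)^p = 2^p * s^p := Real.mul_rpow (by norm_num) hs0.le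
    calc Q1 s ≤ Q (s+a+1) := h2 ▸ h1
    _ ≤ ‖Q (s+a+1)‖ := by rw [Real.norm_eq_abs]; exact le_abs_self _
    _ ≤ 1 * ‖(s+a+1:ℝ)^p‖ := by simpa using h4
    _ = (s+a+1)^p := by rw [one_mul, h5]
    _ ≤ (2*s)^p := h6
    _ = 2^p * s^p := h7
  -- lower bound for W at infinity
  set Ccst : ℝ := δ / (2^m * 2^p) with hCdef
  have hCpos : 0 < Ccst := div_pos hδ (mul_pos (by positivity) h2p)
  set κ : ℝ := Ccst ^ ((p-1)⁻¹) with hκdef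
  have hκpos : 0 < κ := Real.rpow_pos_of_pos hCpos _
  have hWlow : ∀ s, s₁ ≤ s → κ * (1/s) ≤ W s := by
    intro s hs
    have hs0 : 0 < s := lt_of_lt_of_le hs₁pos hs
    have hs20 : 0 < s/2 := by linarith
    have hQ1s := hQ1pos s
    have hQg := hQ1growth s hs
    have hsp : 0 < s^p := Real.rpow_pos_of_pos hs0 p
    -- A s ≥ δ (s/2)^m / Q1 s
    have hAA : A s - A (s/2) = ∫ t in (s/2)..s, fA t := by
      rw [hAdef]; dsimp only
      rw [integral_interval_sub_left (hfAint 0 s) (hfAint 0 (s/2))]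
    have hlow : ∀ t ∈ Set.Icc (s/2) s, δ * (s/2)^(m-1) / Q1 s ≤ fA t := by
      intro t ht
      rw [hfAdef]; dsimp only
      have ht0 : (0:ℝ) ≤ t := le_trans hs20.le ht.1
      exact div_le_div₀ (mul_nonneg hδ.le (pow_nonneg ht0 _))
        (mul_le_mul_of_nonneg_left (pow_le_pow_left₀ hs20.le ht.1 _) hδ.le)
        (hQ1pos t) (hQ1mono ht.2)
    have hint : (s/2) * (δ * (s/2)^(m-1)/Q1 s) ≤ A s - A (s/2) := by
      rw [hAA]
      have := integral_mono_on (by linarith : s/2 ≤ s) intervalIntegrable_const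
        (hfAint (s/2) s) hlow
      rw [intervalIntegral.integral_const] at this
      calc (s/2) * (δ * (s/2)^(m-1)/Q1 s) = (s - s/2) • (δ * (s/2)^(m-1)/Q1 s) := by
            rw [smul_eq_mul]; ring_nf
      _ ≤ _ := this
    have hA2 : 0 ≤ A (s/2) := hAnonneg _ hs20.le
    have hAs : δ * (s/2)^m / Q1 s ≤ A s := by
      have hpow : (s/2)^(m-1) * (s/2) = (s/2)^m := by
        rw [← pow_succ]
        congr 1
        omega
      have heq : (s/2) * (δ * (s/2)^(m-1)/Q1 s) = δ * (s/2)^m/Q1 s := by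
        rw [← hpow]; ring
      rw [heq] at hint
      linarith [hint, hA2]
    -- G s ≥ Ccst * (s / s^p)
    have hGlow : Ccst * (s / s^p) ≤ G s := by
      rw [hGdef]; dsimp only
      rw [le_div_iff₀ (pow_pos hs0 _)]
      have hsm : (s/2:ℝ)^m = s^m / 2^m := div_pow s 2 m
      have hss : s^(m-1) * s = s^m := by
        rw [← pow_succ]; congr 1; omega
      -- suffices: Ccst * (s/s^p) * s^(m-1) ≤ δ (s/2)^m / Q1 s ≤ A s
      refine le_trans ?_ hAs
      rw [hCdef, hsm, le_div_iff₀ hQ1s]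
      have hmain : δ / (2^m * 2^p) * (s / s^p) * s^(m-1) * Q1 s ≤
          δ / (2^m * 2^p) * (s / s^p) * s^(m-1) * (2^p * s^p) := by
        apply mul_le_mul_of_nonneg_left hQg
        positivity
      refine le_trans hmain (le_of_eq ?_)
      field_simp
      rw [← hss]
      ring
    have hWs : (Ccst * (s/s^p)) ^ ((p-1)⁻¹) ≤ W s := by
      rw [hWeq s hs0]
      exact Real.rpow_le_rpow (by positivity) hGlow (by positivity)
    refine le_trans (le_of_eq ?_) hWs
    rw [Real.mul_rpow hCpos.le (by positivity), ← hκdef]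
    congr 1
    have h1 : s / s^p = s ^ (1 - p) := by
      rw [Real.rpow_sub hs0, Real.rpow_one]
    rw [h1, ← Real.rpow_mul hs0.le]
    rw [show (1-p) * (p-1)⁻¹ = -1 by field_simp; ring]
    rw [Real.rpow_neg_one]
    exact one_div s
  -- V tends to infinity
  have hVtop : Tendsto V atTop atTop := by
    have hbound : ∀ r, s₁ ≤ r → V s₁ + κ * (Real.log r - Real.log s₁) ≤ V r := by
      intro r hr
      have hr0 : 0 < r := lt_of_lt_of_le hs₁pos hr
      have hVV : V r - V s₁ = ∫ s in s₁..r, W s := by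
        rw [hVdef]; dsimp only
        rw [integral_interval_sub_left (hWint 0 r) (hWint 0 s₁)]
      have hi : ContinuousOn (fun s : ℝ => κ * (1/s)) (Set.uIcc s₁ r) := by
        apply ContinuousOn.mul continuousOn_const
        apply ContinuousOn.div continuousOn_const continuousOn_id
        intro t ht
        rw [Set.uIcc_of_le hr] at ht
        have : (0:ℝ) < t := lt_of_lt_of_le hs₁pos ht.1
        exact this.ne'
      have hge : ∫ s in s₁..r, κ * (1/s) ≤ ∫ s in s₁..r, W s :=
        integral_mono_on hr (hi.intervalIntegrable) (hWint s₁ r)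
          (fun t ht => hWlow t ht.1)
      have hlog : ∫ s in s₁..r, κ * (1/s) = κ * (Real.log r - Real.log s₁) := by
        rw [intervalIntegral.integral_const_mul]
        congr 1
        rw [integral_one_div ?_]
        · rw [Real.log_div hr0.ne' hs₁pos.ne']
        · intro hmem
          rw [Set.uIcc_of_le hr] at hmem
          linarith [hmem.1]
      linarith [hVV, hge, hlog ▸ hge]
    have htop : Tendsto (fun r => V s₁ + κ * (Real.log r - Real.log s₁)) atTop atTop := by
      apply tendsto_atTop_add_const_left
      apply Tendsto.const_mul_atTop hκpos
      have : (fun r : ℝ => Real.log r - Real.log s₁) = fun r => Real.log r + (- Real.log s₁) := by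
        funext r; ring
      rw [this]
      exact tendsto_atTop_add_const_right _ _ Real.tendsto_log_atTop
    apply tendsto_atTop_mono' atTop ?_ htop
    filter_upwards [eventually_ge_atTop s₁] with r hr
    exact hbound r hr
  exact ⟨Q1, A, W, V, hQ1pos, hQ1bQ, hAderiv, hApos, hWcont, hWnonneg, hWpos, hWdiffAt,
    hWpow, hVderiv, hV0, hVnonneg, hVsmall, hVtop⟩


section Rad
variable {m : ℕ}
local notation "E" => EuclideanSpace ℝ (Fin m)

lemma hasFDerivAt_norm_sub (c x : E) (hx : x ≠ c) :
    HasFDerivAt (fun y : E => ‖y - c‖) (‖x - c‖⁻¹ • innerSL ℝ (x - c)) x := by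
  have hxc : x - c ≠ 0 := sub_ne_zero.2 hx
  have hr : (0:ℝ) < ‖x - c‖ := norm_pos_iff.2 hxc
  have h0 : HasFDerivAt (fun y : E => y - c) (ContinuousLinearMap.id ℝ _) x :=
    (hasFDerivAt_id x).sub_const c
  have h1 := h0.norm_sq
  rw [ContinuousLinearMap.comp_id] at h1
  have h2 : HasDerivAt Real.sqrt (1/(2 * Real.sqrt (‖x-c‖^2))) (‖x-c‖^2) :=
    Real.hasDerivAt_sqrt (by positivity)
  have h3 := h2.comp_hasFDerivAt x h1
  have hfe : (fun y : E => Real.sqrt (‖y - c‖^2)) = fun y : E => ‖y - c‖ := by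
    funext y; rw [Real.sqrt_sq (norm_nonneg _)]
  simp only [Function.comp_def] at h3
  rw [hfe] at h3
  have hDeq : (‖x - c‖⁻¹ • innerSL ℝ (x - c) : EuclideanSpace ℝ (Fin m) →L[ℝ] ℝ)
      = (1 / (2 * Real.sqrt (‖x - c‖ ^ 2))) • 2 • innerSL ℝ (x - c) := by
    rw [Real.sqrt_sq (norm_nonneg _)]
    ext z
    simp only [ContinuousLinearMap.smul_apply, innerSL_apply_apply, smul_eq_mul, nsmul_eq_mul,
      Nat.cast_ofNat]
    field_simp
  rw [hDeq]
  exact h3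

lemma radial_geometry (hm : 1 ≤ m) (p : ℝ) (hp : 2 ≤ p)
    (Q1 A W V : ℝ → ℝ) (δ : ℝ) (hδ : 0 < δ)
    (hQ1pos : ∀ s, 0 < Q1 s)
    (hAderiv : ∀ r : ℝ, HasDerivAt A (δ * r^(m-1) / Q1 r) r)
    (hWpos : ∀ s, 0 < s → 0 < W s)
    (hWnonneg : ∀ s, 0 ≤ W s)
    (hWdiff : ∀ s, 0 < s → DifferentiableAt ℝ W s)
    (hWpow : ∀ s, 0 < s → (W s) ^ (p-1) = A s / s^(m-1))
    (hVderiv : ∀ r : ℝ, HasDerivAt V (W r) r)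
    (hVsmall : ∀ ε > (0:ℝ), ∃ θ > (0:ℝ), ∀ s, 0 ≤ s → s < θ → V s ≤ ε * s)
    (hVnonneg : ∀ r, 0 ≤ V r)
    (hV0 : V 0 = 0)
    (c : E) :
    ∃ gv : EuclideanSpace ℝ (Fin m) → EuclideanSpace ℝ (Fin m),
      HasGradientAt (fun x : E => V ‖x - c‖) 0 c ∧
      (∀ x : E, x ≠ c → HasGradientAt (fun y : E => V ‖y - c‖) (gv x) x) ∧
      (∀ x : E, x ≠ c → gv x ≠ 0) ∧
      (∀ x₀ : E, x₀ ≠ c → ∃ DV : EuclideanSpace ℝ (Fin m) →L[ℝ] EuclideanSpace ℝ (Fin m),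
        HasFDerivAt gv DV x₀ ∧
        euclideanDiv (fun y => ‖gv y‖ ^ (p-2) • gv y) x₀ = δ / Q1 ‖x₀ - c‖) := by
  set gv : E → E := fun x => (W ‖x - c‖ * ‖x - c‖⁻¹) • (x - c) with hgvdef
  -- the gradient formula away from c
  have hgrad : ∀ x : E, x ≠ c → HasGradientAt (fun y : E => V ‖y - c‖) (gv x) x := by
    intro x hx
    have hxc : x - c ≠ 0 := sub_ne_zero.2 hx
    have hr : (0:ℝ) < ‖x - c‖ := norm_pos_iff.2 hxc
    have h4 : HasFDerivAt (fun y : E => V ‖y - c‖) _ x :=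
      (hVderiv ‖x - c‖).comp_hasFDerivAt x (hasFDerivAt_norm_sub c x hx)
    rw [hasGradientAt_iff_hasFDerivAt]
    refine h4.congr_fderiv ?_
    ext z
    rw [InnerProductSpace.toDual_apply_apply]
    simp only [hgvdef, ContinuousLinearMap.smul_apply, innerSL_apply_apply, smul_eq_mul,
      real_inner_smul_left]
    ring
  -- gradient at the center
  have hgradc : HasGradientAt (fun y : E => V ‖y - c‖) 0 c := by
    rw [hasGradientAt_iff_hasFDerivAt]
    have h0 : ((InnerProductSpace.toDual ℝ (EuclideanSpace ℝ (Fin m))) (0 : E))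
        = 0 := map_zero _
    rw [h0, hasFDerivAt_iff_isLittleO_nhds_zero, Asymptotics.isLittleO_iff]
    intro ε hε
    obtain ⟨θ, hθ, hsm⟩ := hVsmall ε hε
    filter_upwards [Metric.ball_mem_nhds (0:E) hθ] with h hh
    rw [Metric.mem_ball, dist_zero_right] at hh
    have key : V ‖h‖ ≤ ε * ‖h‖ := hsm ‖h‖ (norm_nonneg _) hh
    simp only [add_sub_cancel_left, sub_self, norm_zero, hV0, sub_zero,
      ContinuousLinearMap.zero_apply]
    rw [Real.norm_eq_abs, abs_of_nonneg (hVnonneg _)]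
    exact key
  -- nonvanishing
  have hgvne : ∀ x : E, x ≠ c → gv x ≠ 0 := by
    intro x hx
    have hxc : x - c ≠ 0 := sub_ne_zero.2 hx
    have hr : (0:ℝ) < ‖x - c‖ := norm_pos_iff.2 hxc
    apply smul_ne_zero _ hxc
    exact (mul_pos (hWpos _ hr) (inv_pos.2 hr)).ne'
  refine ⟨gv, hgradc, hgrad, hgvne, ?_⟩
  intro x₀ hx₀
  have hxc : x₀ - c ≠ 0 := sub_ne_zero.2 hx₀
  have hr : (0:ℝ) < ‖x₀ - c‖ := norm_pos_iff.2 hxc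
  set r₀ : ℝ := ‖x₀ - c‖ with hr₀def
  -- differentiability of gv at x₀
  have hσdiff : DifferentiableAt ℝ (fun s : ℝ => W s * s⁻¹) r₀ :=
    (hWdiff r₀ hr).mul (differentiableAt_inv hr.ne')
  have hsc : HasFDerivAt (fun y : E => W ‖y - c‖ * ‖y - c‖⁻¹)
      ((deriv (fun s : ℝ => W s * s⁻¹) r₀) • (r₀⁻¹ • innerSL ℝ (x₀ - c))) x₀ :=
    by have := (hσdiff.hasDerivAt).comp_hasFDerivAt x₀ (hasFDerivAt_norm_sub c x₀ hx₀); exact this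
  have hvec : HasFDerivAt (fun y : E => y - c) (ContinuousLinearMap.id ℝ _) x₀ :=
    (hasFDerivAt_id x₀).sub_const c
  have hgvD := hsc.smul hvec
  refine ⟨_, hgvD, ?_⟩
  -- the field equals the ρ-field
  set ρ : ℝ → ℝ := fun s => A s / s^m with hρdef
  have hfield : (fun y => ‖gv y‖ ^ (p-2) • gv y) = fun y : E => ρ ‖y - c‖ • (y - c) := by
    funext y
    rcases eq_or_ne y c with rfl|hy
    · simp [hgvdef, hρdef]
    · have hyc : y - c ≠ 0 := sub_ne_zero.2 hy
      have hry : (0:ℝ) < ‖y - c‖ := norm_pos_iff.2 hyc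
      have hWy := hWpos _ hry
      have hnorm : ‖gv y‖ = W ‖y - c‖ := by
        rw [hgvdef]
        simp only
        rw [norm_smul, Real.norm_eq_abs,
          abs_of_nonneg (mul_nonneg (hWnonneg _) (inv_nonneg.2 hry.le))]
        field_simp
      rw [hnorm, hgvdef]
      simp only
      rw [smul_smul]
      congr 1
      have h1 : (W ‖y-c‖)^(p-2) * (W ‖y-c‖ * ‖y-c‖⁻¹) =
          ((W ‖y-c‖)^(p-2) * W ‖y-c‖) * ‖y-c‖⁻¹ := by ring
      rw [h1]
      have h2 : (W ‖y-c‖)^(p-2) * W ‖y-c‖ = (W ‖y-c‖)^(p-1) := by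
        rw [show p - 1 = (p-2) + 1 by ring, Real.rpow_add_one hWy.ne']
      rw [h2, hWpow _ hry, hρdef]
      have h3 : ‖y - c‖^m = ‖y-c‖^(m-1) * ‖y - c‖ := by
        rw [← pow_succ]; congr 1; omega
      simp only
      rw [h3]
      field_simp
  rw [hfield]
  -- compute the divergence of the ρ-field
  have hρd : HasDerivAt ρ ((δ * r₀^(m-1)/Q1 r₀ * r₀^m - A r₀ * (↑m * r₀^(m-1))) / (r₀^m)^2) r₀ :=
    (hAderiv r₀).div (hasDerivAt_pow m r₀) (pow_ne_zero m hr.ne')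
  set ρ' : ℝ := (δ * r₀^(m-1)/Q1 r₀ * r₀^m - A r₀ * (↑m * r₀^(m-1))) / (r₀^m)^2 with hρ'def
  have hcomp : ∀ i : Fin m, fderiv ℝ (fun y : EuclideanSpace ℝ (Fin m) =>
        (ρ ‖y - c‖ • (y - c)) i) x₀ (EuclideanSpace.single i 1)
      = ρ r₀ + (x₀ i - c i)^2 * (ρ' * r₀⁻¹) := by
    intro i
    have hsc_i : HasFDerivAt (fun y : EuclideanSpace ℝ (Fin m) => ρ ‖y - c‖)
        (ρ' • (r₀⁻¹ • innerSL ℝ (x₀ - c))) x₀ :=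
      by have := hρd.comp_hasFDerivAt x₀ (hasFDerivAt_norm_sub c x₀ hx₀); exact this
    have hcoord : HasFDerivAt (fun y : EuclideanSpace ℝ (Fin m) => y i - c i)
        ((EuclideanSpace.proj (𝕜 := ℝ) i) : EuclideanSpace ℝ (Fin m) →L[ℝ] ℝ) x₀ :=
      (EuclideanSpace.proj (𝕜 := ℝ) i).hasFDerivAt.sub_const (c i)
    have hprod : HasFDerivAt (fun y : EuclideanSpace ℝ (Fin m) => ρ ‖y - c‖ * (y i - c i)) _ x₀ :=
      hsc_i.mul hcoord
    have hfun : (fun y : EuclideanSpace ℝ (Fin m) => (ρ ‖y - c‖ • (y - c)) i)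
        = fun y : EuclideanSpace ℝ (Fin m) => ρ ‖y - c‖ * (y i - c i) := rfl
    rw [hfun, hprod.fderiv]
    have hproj : (EuclideanSpace.proj (𝕜 := ℝ) i) (EuclideanSpace.single i (1:ℝ)) = 1 := by
      have : (EuclideanSpace.single i (1:ℝ)) i = 1 := by
        rw [EuclideanSpace.single_apply]; simp
      exact this
    have hinner : (inner ℝ (x₀ - c) (EuclideanSpace.single i (1:ℝ)) : ℝ) = x₀ i - c i := by
      rw [EuclideanSpace.inner_single_right]
      simp only [starRingEnd_apply, star_trivial, one_mul]
      rfl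
    simp only [ContinuousLinearMap.add_apply, ContinuousLinearMap.smul_apply,
      innerSL_apply_apply, smul_eq_mul, hproj, hinner]
    ring
  unfold euclideanDiv
  rw [Finset.sum_congr rfl (fun i _ => hcomp i), Finset.sum_add_distrib, Finset.sum_const,
    ← Finset.sum_mul]
  have hsum : ∑ i, (x₀ i - c i)^2 = r₀^2 := by
    have hne := EuclideanSpace.norm_eq (x₀ - c)
    have h1 : ‖x₀ - c‖^2 = ∑ i, ‖(x₀ - c) i‖^2 := by
      rw [hne, Real.sq_sqrt]
      positivity
    rw [hr₀def, h1]
    refine Finset.sum_congr rfl fun i _ => ?_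
    rw [Real.norm_eq_abs, sq_abs]
    rfl
  rw [hsum]
  simp only [Finset.card_univ, Fintype.card_fin, nsmul_eq_mul]
  -- final algebraic identity
  have hmm : r₀^m = r₀^(m-1) * r₀ := by rw [← pow_succ]; congr 1; omega
  rw [hρ'def, hρdef]
  simp only
  rw [hmm]
  have hP : (0:ℝ) < r₀^(m-1) := pow_pos hr _
  field_simp
  ring


end Rad

end PLapAux
namespace PLapAux

section Main
variable {m : ℕ}
local notation "E" => EuclideanSpace ℝ (Fin m)

lemma gradient_eq_of {f : E → ℝ} {g : E} {x : E}
    (h : HasGradientAt f g x) : gradient f x = g :=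
  h.differentiableAt.hasGradientAt.unique h

lemma pLaplacian_eq_nmap (p : ℝ) (u : E → ℝ) (x₀ : E) :
    pLaplacian p u x₀
      = euclideanDiv (fun y => ‖gradient u y‖^(p-2) • gradient u y) x₀ := by
  unfold pLaplacian
  congr 1
  funext y
  split_ifs with h
  · rw [h]; simp
  · rfl

lemma pLaplacian_const (p k : ℝ) (x : E) :
    pLaplacian p (fun _ : E => k) x = 0 := by
  have hg : ∀ y : E, gradient (fun _ : E => k) y = 0 := by
    intro y
    unfold gradient
    rw [fderiv_const_apply, map_zero]
  unfold pLaplacian euclideanDiv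
  have hX : (fun y : E => if gradient (fun _ : E => k) y = 0 then (0:E)
      else ‖gradient (fun _ : E => k) y‖ ^ (p - 2) • gradient (fun _ : E => k) y)
      = fun _ : E => (0:E) := by
    funext y; rw [hg y]; simp
  rw [hX]
  simp

lemma exists_good_point (u : E → ℝ) (hu : ContDiff ℝ 2 u)
    (β : ℝ) (xh : E) (hxh : β < u xh)
    (hnc : ∃ y : E, u y ≠ u xh) :
    ∃ c : E, β < u c ∧ gradient u c ≠ 0 := by
  by_contra hcon
  push_neg at hcon
  obtain ⟨y, hy⟩ := hnc
  set γp : ℝ → E := fun t => xh + (max 0 (min t 1)) • (y - xh) with hγdef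
  have hγcont : Continuous γp := by fun_prop
  set B : Set ℝ := {t | u (γp t) = u xh} with hBdef
  have hBclosed : IsClosed B := isClosed_eq ((hu.continuous).comp hγcont) continuous_const
  have hBopen : IsOpen B := by
    rw [isOpen_iff_mem_nhds]
    intro t ht
    have ht' : u (γp t) = u xh := ht
    have hub : β < u (γp t) := by rw [ht']; exact hxh
    have hS : IsOpen {x : E | β < u x} := isOpen_lt continuous_const hu.continuous
    obtain ⟨ε, hε, hball⟩ := Metric.isOpen_iff.1 hS (γp t) hub
    have hconst : ∀ z ∈ Metric.ball (γp t) ε, u z = u (γp t) := by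
      intro z hz
      have hdiff : ∀ x ∈ Metric.ball (γp t) ε, DifferentiableAt ℝ u x := fun x _ =>
        hu.differentiable (by norm_num) x
      have hbound : ∀ x ∈ Metric.ball (γp t) ε, ‖fderiv ℝ u x‖ ≤ 0 := by
        intro x hx
        have hg : gradient u x = 0 := hcon x (hball hx)
        have hfz : fderiv ℝ u x = 0 := by
          have h1 : (InnerProductSpace.toDual ℝ (EuclideanSpace ℝ (Fin m))).symm
              (fderiv ℝ u x) = 0 := hg
          have h2 := congrArg (InnerProductSpace.toDual ℝ (EuclideanSpace ℝ (Fin m))) h1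
          rwa [LinearIsometryEquiv.apply_symm_apply, map_zero] at h2
        rw [hfz]; simp
      have := (convex_ball _ _).norm_image_sub_le_of_norm_fderiv_le hdiff hbound
        (Metric.mem_ball_self hε) hz
      simp only [zero_mul] at this
      have : ‖u z - u (γp t)‖ ≤ 0 := this
      have := le_antisymm this (norm_nonneg _)
      rwa [norm_eq_zero, sub_eq_zero] at this
    have hev : ∀ᶠ s in nhds t, γp s ∈ Metric.ball (γp t) ε :=
      hγcont.continuousAt.preimage_mem_nhds (Metric.ball_mem_nhds _ hε)
    filter_upwards [hev] with s hs
    show u (γp s) = u xh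
    rw [hconst _ hs, ht']
  have h0B : (0:ℝ) ∈ B := by
    show u (γp 0) = u xh
    rw [hγdef]
    norm_num
  have hBuniv : B = Set.univ := IsClopen.eq_univ ⟨hBclosed, hBopen⟩ ⟨0, h0B⟩
  have h1B : (1:ℝ) ∈ B := hBuniv ▸ Set.mem_univ 1
  apply hy
  have hγ1 : γp 1 = y := by
    rw [hγdef]
    norm_num
  have : u (γp 1) = u xh := h1B
  rwa [hγ1] at this

end Main
end PLapAux

open PLapAux

theorem stmt4 {m : ℕ} (hm : 2 ≤ m) (p : ℝ) (hp : 2 ≤ p)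
    (Q : ℝ → ℝ)
    (hQpos : ∀ t > (0:ℝ), 0 < Q t)
    (hQmono : ∀ s t : ℝ, 0 < s → s ≤ t → Q s ≤ Q t)
    (hQo : Q =o[atTop] fun t => t ^ p)
    (hliminf : ∃ C : ℝ, ∃ᶠ r in atTop, Q r * Real.log r / r ^ p ≤ C)
    (b : EuclideanSpace ℝ (Fin m) → ℝ) (hb : Continuous b)
    (hbQ : ∀ x : EuclideanSpace ℝ (Fin m), 0 < ‖x‖ → 1 / Q ‖x‖ ≤ b x)
    (f : ℝ → ℝ) (hf : Continuous f)
    (u : EuclideanSpace ℝ (Fin m) → ℝ) (hu : ContDiff ℝ 2 u)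
    (hbdd : BddAbove (Set.range u))
    (γ : ℝ) (hγ : γ < ⨆ x, u x)
    (hineq : ∀ x : EuclideanSpace ℝ (Fin m), γ < u x →
      b x * f (u x) ≤ pLaplacian p u x) :
    f (⨆ x, u x) ≤ 0 := by
  by_contra hf0
  push_neg at hf0
  classical
  haveI hFinNe : Nonempty (Fin m) := ⟨⟨0, by omega⟩⟩
  set ustar : ℝ := ⨆ x, u x with hustardef
  have hle : ∀ x, u x ≤ ustar := fun x => le_ciSup hbdd x
  set δ₀ : ℝ := f ustar / 2 with hδ₀def
  have hδ₀pos : 0 < δ₀ := half_pos hf0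
  obtain ⟨η, hηpos, hfball⟩ := Metric.continuousAt_iff.1 hf.continuousAt δ₀ hδ₀pos
  set γ' : ℝ := max γ (ustar - η/2) with hγ'def
  have hγγ' : γ ≤ γ' := le_max_left _ _
  have hγ'lt : γ' < ustar := max_lt hγ (by linarith)
  have hfδ : ∀ x, γ' < u x → δ₀ ≤ f (u x) := by
    intro x hx
    have h1 : u x ≤ ustar := hle x
    have h2 : ustar - η/2 < u x := lt_of_le_of_lt (le_max_right _ _) hx
    have h3 : dist (u x) ustar < η := by
      rw [Real.dist_eq, abs_of_nonpos (by linarith)]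
      linarith
    have h4 := hfball h3
    rw [Real.dist_eq, abs_lt] at h4
    have h5 : f ustar = 2 * δ₀ := by rw [hδ₀def]; ring
    linarith [h4.1]
  obtain ⟨xh, hxh⟩ := exists_lt_of_lt_ciSup hγ'lt
  by_cases hconst : ∀ y, u y = u xh
  · -- constant case
    have hsup : ustar = u xh :=
      le_antisymm (ciSup_le fun x => (hconst x).le) (le_ciSup hbdd xh)
    set x1 : EuclideanSpace ℝ (Fin m) := EuclideanSpace.single ⟨0, by omega⟩ (1:ℝ) with hx1def
    have hx1n : ‖x1‖ = 1 := by rw [hx1def]; simp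
    have hux1 : γ < u x1 := by
      rw [hconst x1, ← hsup]
      exact hγ
    have hineq1 := hineq x1 hux1
    have hpl : pLaplacian p u x1 = 0 := by
      have hufun : u = fun _ => u xh := funext hconst
      rw [hufun]
      exact pLaplacian_const p (u xh) x1
    have hb1 : 1/Q 1 ≤ b x1 := by
      have := hbQ x1 (by rw [hx1n]; exact one_pos)
      rwa [hx1n] at this
    have hQ1p := hQpos 1 one_pos
    have hfux1 : f (u x1) = f ustar := by rw [hconst x1, ← hsup]
    rw [hpl, hfux1] at hineq1
    nlinarith [hineq1, hb1, hQ1p, hf0, one_div_pos.2 hQ1p]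
  · push_neg at hconst
    obtain ⟨c, hcu, hcgrad⟩ := exists_good_point u hu γ' xh hxh hconst
    set a : ℝ := ‖c‖ + 1 with hadef
    have ha1 : 1 ≤ a := by have := norm_nonneg c; rw [hadef]; linarith
    obtain ⟨Q1, A, W, V, hQ1pos, hQ1bQ, hAderiv, hApos, hWcont, hWnonneg, hWpos, hWdiffAt,
      hWpow, hVderiv, hV0, hVnonneg, hVsmall, hVtop⟩ :=
      oneD_construction m (by omega) p hp Q hQpos hQmono hQo (δ₀/2) (half_pos hδ₀pos) a ha1
    obtain ⟨gv, hgradc, hgrad, hgvne, hdiv⟩ :=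
      radial_geometry (by omega) p hp Q1 A W V (δ₀/2) (half_pos hδ₀pos) hQ1pos hAderiv
        hWpos hWnonneg hWdiffAt hWpow hVderiv hVsmall hVnonneg hV0 c
    set v : EuclideanSpace ℝ (Fin m) → ℝ := fun x => V ‖x - c‖ with hvdef
    have hVcont : Continuous V := by
      rw [continuous_iff_continuousAt]
      exact fun r => (hVderiv r).differentiableAt.continuousAt
    have hvcont : Continuous v := hVcont.comp ((continuous_id.sub continuous_const).norm)
    have hvc0 : v c = 0 := by rw [hvdef]; simp [hV0]
    have hvnn : ∀ y, 0 ≤ v y := fun y => hVnonneg _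
    -- global max of u - v
    obtain ⟨R, hR⟩ := eventually_atTop.1 (hVtop.eventually_ge_atTop (ustar - u c + 1))
    set R' : ℝ := max R 0 with hR'def
    obtain ⟨x₀, hx₀K, hx₀max⟩ := (isCompact_closedBall c R').exists_isMaxOn
      ⟨c, Metric.mem_closedBall_self (le_max_right _ _)⟩
      ((hu.continuous.sub hvcont).continuousOn)
    have hwc : u c - v c ≤ u x₀ - v x₀ :=
      hx₀max (Metric.mem_closedBall_self (le_max_right _ _))
    have hmax : ∀ y, u y - v y ≤ u x₀ - v x₀ := by
      intro y
      rcases le_or_gt (dist y c) R' with hyR|hyR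
      · exact hx₀max (Metric.mem_closedBall.2 hyR)
      · have hyn : R ≤ ‖y - c‖ := by
          rw [← dist_eq_norm]
          exact le_trans (le_max_left R 0) hyR.le
        have h1 : ustar - u c + 1 ≤ V ‖y - c‖ := hR _ hyn
        have h2 : u y - v y ≤ u c - v c := by
          rw [hvc0, hvdef]
          have h3 : u y ≤ ustar := hle y
          simp only
          linarith
        linarith [hwc]
    have hux₀ : γ' < u x₀ := by
      have h1 := hvnn x₀
      rw [hvc0] at hwc
      linarith [hcu]
    -- derivatives of u
    have hudiff : Differentiable ℝ u := hu.differentiable (by norm_num)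
    have hfd1 : Differentiable ℝ (fderiv ℝ u) :=
      (hu.fderiv_right (m := 1) (by norm_num)).differentiable (by norm_num)
    have hgdiff : Differentiable ℝ (gradient u) := by
      intro x
      have hT := ContinuousLinearMap.differentiable ((InnerProductSpace.toDual ℝ
        (EuclideanSpace ℝ (Fin m))).symm.toContinuousLinearEquiv.toContinuousLinearMap)
      exact (hT.differentiableAt).comp x (hfd1 x)
    have hDU : HasFDerivAt (gradient u) (fderiv ℝ (gradient u) x₀) x₀ :=
      (hgdiff x₀).hasFDerivAt
    have hlocmax : IsLocalMax (fun y => u y - v y) x₀ := Filter.Eventually.of_forall hmax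
    have hfderiv0 := hlocmax.fderiv_eq_zero
    have hfeq : ∀ z : EuclideanSpace ℝ (Fin m), IsLocalMax (fun y => u y - v y) z →
        DifferentiableAt ℝ v z → fderiv ℝ u z = fderiv ℝ v z := by
      intro z hz hv
      have h1 : fderiv ℝ (fun y => u y - v y) z = _ := fderiv_sub (hudiff z) hv
      rw [hz.fderiv_eq_zero] at h1
      have := h1.symm
      rwa [sub_eq_zero] at this
    have hx₀c : x₀ ≠ c := by
      intro h
      apply hcgrad
      have hvd : DifferentiableAt ℝ v c := hgradc.differentiableAt
      have h1 : fderiv ℝ u c = fderiv ℝ v c := by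
        apply hfeq c (h ▸ hlocmax) hvd
      have h2 : gradient v c = 0 := gradient_eq_of hgradc
      have h3 : gradient u c = gradient v c := by unfold gradient; rw [h1]
      rw [h3, h2]
    have hgveq : gradient v =ᶠ[nhds x₀] gv := by
      filter_upwards [isOpen_compl_singleton.mem_nhds hx₀c] with y hy
      exact gradient_eq_of (hgrad y hy)
    have hvdiffev : ∀ᶠ y in nhds x₀, DifferentiableAt ℝ v y := by
      filter_upwards [isOpen_compl_singleton.mem_nhds hx₀c] with y hy
      exact (hgrad y hy).differentiableAt
    have heqgrad : gradient u x₀ = gv x₀ := by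
      have h1 : fderiv ℝ u x₀ = fderiv ℝ v x₀ :=
        hfeq x₀ hlocmax (hgrad x₀ hx₀c).differentiableAt
      have h2 : gradient v x₀ = gv x₀ := gradient_eq_of (hgrad x₀ hx₀c)
      have h3 : gradient u x₀ = gradient v x₀ := by unfold gradient; rw [h1]
      rw [h3, h2]
    obtain ⟨DV, hDV, hdivval⟩ := hdiv x₀ hx₀c
    have hVgev : ∀ᶠ y in nhds x₀, HasGradientAt v (gv y) y := by
      filter_upwards [isOpen_compl_singleton.mem_nhds hx₀c] with y hy
      exact hgrad y hy
    have hneg := grad_deriv_compare u v (gradient u) gv (fderiv ℝ (gradient u) x₀) DV x₀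
      (Filter.Eventually.of_forall (fun y => (hudiff y).hasGradientAt)) hVgev hDU hDV
      heqgrad hmax
    have hsymU := inner_fderiv_grad_symm u x₀ (fderiv ℝ (gradient u) x₀)
      (Filter.Eventually.of_forall (fun y => hudiff y)) hDU
    have hDVgrad : HasFDerivAt (gradient v) DV x₀ := hDV.congr_of_eventuallyEq hgveq
    have hsymV := inner_fderiv_grad_symm v x₀ DV hvdiffev hDVgrad
    have hqne : gradient u x₀ ≠ 0 := by rw [heqgrad]; exact hgvne x₀ hx₀c
    have hcmp := key_compare p hp (gradient u) gv (fderiv ℝ (gradient u) x₀) DV x₀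
      hDU hDV heqgrad hqne hsymU hsymV hneg
    have hplap : pLaplacian p u x₀
        = euclideanDiv (fun y => ‖gradient u y‖^(p-2) • gradient u y) x₀ :=
      pLaplacian_eq_nmap p u x₀
    -- lower bound for b
    have hQmaxpos : 0 < Q (max ‖x₀‖ 1) := hQpos _ (lt_of_lt_of_le one_pos (le_max_right _ _))
    have hbb : 1 / Q (max ‖x₀‖ 1) ≤ b x₀ := by
      rcases eq_or_ne x₀ 0 with h0|h0
      · haveI : Nontrivial (EuclideanSpace ℝ (Fin m)) := by
          refine ⟨EuclideanSpace.single ⟨0, by omega⟩ (1:ℝ), 0, fun hc => ?_⟩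
          have : ‖EuclideanSpace.single (⟨0, by omega⟩ : Fin m) (1:ℝ)‖ = 0 := by
            rw [hc]; simp
          simp at this
        haveI : (nhdsWithin (0 : EuclideanSpace ℝ (Fin m)) {(0:EuclideanSpace ℝ (Fin m))}ᶜ).NeBot :=
          Module.punctured_nhds_neBot ℝ _ _
        have hev : ∀ᶠ x in nhdsWithin (0 : EuclideanSpace ℝ (Fin m))
            {(0:EuclideanSpace ℝ (Fin m))}ᶜ, 1/Q 1 ≤ b x := by
          rw [eventually_nhdsWithin_iff]
          have hball : ∀ᶠ x in nhds (0:EuclideanSpace ℝ (Fin m)), ‖x‖ ≤ 1 := by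
            filter_upwards [Metric.closedBall_mem_nhds (0:EuclideanSpace ℝ (Fin m)) one_pos]
              with x hx
            simpa [dist_zero_right] using hx
          filter_upwards [hball] with x hx hxne
          have hx0 : 0 < ‖x‖ := norm_pos_iff.2 (by simpa using hxne)
          have h1 := hbQ x hx0
          have h2 := hQmono ‖x‖ 1 hx0 hx
          calc 1/Q 1 ≤ 1/Q ‖x‖ := one_div_le_one_div_of_le (hQpos _ hx0) h2
          _ ≤ b x := h1
        have hbt : Filter.Tendsto b (nhdsWithin (0 : EuclideanSpace ℝ (Fin m))
            {(0:EuclideanSpace ℝ (Fin m))}ᶜ) (nhds (b 0)) :=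
          (hb.continuousAt).mono_left nhdsWithin_le_nhds
        have hfin := ge_of_tendsto hbt hev
        rw [h0]
        simpa [norm_zero] using hfin
      · have hx0 : 0 < ‖x₀‖ := norm_pos_iff.2 h0
        have h1 := hbQ x₀ hx0
        have h2 : Q ‖x₀‖ ≤ Q (max ‖x₀‖ 1) := hQmono _ _ hx0 (le_max_left _ _)
        calc 1/Q (max ‖x₀‖ 1) ≤ 1/Q ‖x₀‖ := one_div_le_one_div_of_le (hQpos _ hx0) h2
        _ ≤ b x₀ := h1
    have hQQ1 : Q (max ‖x₀‖ 1) ≤ Q1 ‖x₀ - c‖ := by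
      apply hQ1bQ _ _ (norm_nonneg _) (lt_of_lt_of_le one_pos (le_max_right _ _))
      have h1 : ‖x₀‖ ≤ ‖x₀ - c‖ + ‖c‖ := by
        calc ‖x₀‖ = ‖(x₀ - c) + c‖ := by rw [sub_add_cancel]
        _ ≤ _ := norm_add_le _ _
      rw [hadef]
      apply max_le (by linarith) (by linarith [norm_nonneg (x₀ - c), norm_nonneg c])
    have hQ1x := hQ1pos ‖x₀ - c‖
    have hA1 : δ₀ * (1/Q (max ‖x₀‖ 1)) ≤ b x₀ * f (u x₀) := by
      have hf1 := hfδ x₀ hux₀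
      have hb0 : 0 ≤ b x₀ := le_trans (by positivity) hbb
      calc δ₀ * (1/Q (max ‖x₀‖ 1)) = (1/Q (max ‖x₀‖ 1)) * δ₀ := mul_comm _ _
      _ ≤ b x₀ * f (u x₀) := mul_le_mul hbb hf1 hδ₀pos.le hb0
    have hA2 := hineq x₀ (lt_of_le_of_lt hγγ' hux₀)
    have hA3 : pLaplacian p u x₀ ≤ δ₀/2 / Q1 ‖x₀ - c‖ := by
      rw [hplap, ← hdivval]
      exact hcmp
    have hA4 : δ₀/2 / Q1 ‖x₀ - c‖ ≤ δ₀/2 / Q (max ‖x₀‖ 1) :=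
      div_le_div_of_nonneg_left (by positivity) hQmaxpos hQQ1
    have hid : δ₀/2 / Q (max ‖x₀‖ 1) = δ₀/2 * (1/Q (max ‖x₀‖ 1)) := by ring
    have hppos := mul_pos (half_pos hδ₀pos) (one_div_pos.2 hQmaxpos)
    linarith [hA1, hA2, hA3, hA4, hid ▸ hA4]
end

section
/- Let m ≥ 2, σ > 1, and let Q : (0,∞) → ℝ be a positive non-decreasing function with Q(t) = o(t²) as t → +∞ and liminf_{r→+∞} Q(r)·(log r)/r² < +∞. Let a, b : ℝ^m → ℝ be continuous functions such that b(x) ≥ 1/Q(|x|) for |x| > 0 and a(x) ≥ 0 for all x ∈ ℝ^m. If u ∈ C²(ℝ^m) is a non-negative function satisfying Δu(x) ≥ b(x) u(x)^σ + a(x) u(x) for all x ∈ ℝ^m, then u is identically zero. -/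
open Filter Asymptotics
open Topology

section AuxLemmas

/-- Second derivative test: at an interior local max, the second derivative is ≤ 0. -/
lemma second_deriv_nonpos_of_isLocalMax {h h' : ℝ → ℝ} {d : ℝ}
    (hh : ∀ᶠ t in nhds (0:ℝ), HasDerivAt h (h' t) t)
    (hd : HasDerivAt h' d 0) (hmax : IsLocalMax h 0) : d ≤ 0 := by
  by_contra hpos
  push_neg at hpos
  have h'0 : h' 0 = 0 := by
    have h1 := hmax.deriv_eq_zero
    rwa [hh.self_of_nhds.deriv] at h1
  have hslope : Tendsto (fun t => t⁻¹ * h' t) (𝓝[≠] (0:ℝ)) (𝓝 d) := by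
    have h2 := hasDerivAt_iff_tendsto_slope.mp hd
    simpa [slope_fun_def, h'0, div_eq_inv_mul] using h2
  have hev : ∀ᶠ t in 𝓝[>] (0:ℝ), 0 < h' t := by
    have h3 : ∀ᶠ t in 𝓝[≠] (0:ℝ), 0 < t⁻¹ * h' t :=
      hslope.eventually (eventually_gt_nhds hpos)
    have h4 : ∀ᶠ t in 𝓝[>] (0:ℝ), 0 < t⁻¹ * h' t :=
      h3.filter_mono (nhdsWithin_mono _ (fun t ht => ne_of_gt ht))
    filter_upwards [h4, self_mem_nhdsWithin] with t ht ht0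
    nlinarith [inv_pos.mpr (Set.mem_Ioi.mp ht0), mul_pos (inv_pos.mpr (Set.mem_Ioi.mp ht0)) (Set.mem_Ioi.mp ht0)]
  -- get an interval (0, δ) where h' > 0 and h differentiable near
  obtain ⟨v, hv, hvsub⟩ := mem_nhdsGT_iff_exists_Ioo_subset.mp hev
  obtain ⟨ε, hε, hball⟩ := Metric.eventually_nhds_iff.mp hh
  set δ : ℝ := min v ε / 2 with hδdef
  have hv0 : (0:ℝ) < v := hv
  have hδ0 : 0 < δ := by positivity
  have hδv : δ < v := by
    have h5 : min v ε ≤ v := min_le_left _ _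
    have : δ ≤ v / 2 := by rw [hδdef]; linarith
    linarith
  have hδε : δ < ε := by
    have h5 : min v ε ≤ ε := min_le_right _ _
    have : δ ≤ ε / 2 := by rw [hδdef]; linarith
    linarith
  have hsm : StrictMonoOn h (Set.Icc 0 δ) := by
    apply strictMonoOn_of_deriv_pos (convex_Icc 0 δ)
    · intro t ht
      have habs : dist t 0 < ε := by
        rw [Real.dist_eq, sub_zero, abs_lt]
        constructor <;> [linarith [ht.1]; linarith [ht.2]]
      exact (hball habs).continuousAt.continuousWithinAt
    · intro t ht
      rw [interior_Icc] at ht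
      have habs : dist t 0 < ε := by
        rw [Real.dist_eq, sub_zero, abs_lt]
        constructor <;> [linarith [ht.1]; linarith [ht.2]]
      rw [(hball habs).deriv]
      exact hvsub ⟨ht.1, lt_trans ht.2 hδv⟩
  have hmax' : ∀ᶠ t in 𝓝[>] (0:ℝ), h t ≤ h 0 := hmax.filter_mono nhdsWithin_le_nhds
  have hIoo : ∀ᶠ t in 𝓝[>] (0:ℝ), t ∈ Set.Ioo (0:ℝ) δ :=
    Ioo_mem_nhdsGT_of_mem ⟨le_refl 0, hδ0⟩
  obtain ⟨t, ht1, ht2⟩ := (hmax'.and hIoo).exists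
  have : h 0 < h t := hsm ⟨le_refl 0, hδ0.le⟩ ⟨ht2.1.le, ht2.2.le⟩ ht2.1
  linarith

variable {m : ℕ}

lemma line_hasDerivAt (y e : EuclideanSpace ℝ (Fin m)) (t : ℝ) :
    HasDerivAt (fun s : ℝ => y + s • e) e t := by
  simpa using ((hasDerivAt_id t).smul_const e).const_add y

lemma slice_hasDerivAt {u : EuclideanSpace ℝ (Fin m) → ℝ} (hu : Differentiable ℝ u)
    (y e : EuclideanSpace ℝ (Fin m)) (t : ℝ) :
    HasDerivAt (fun s : ℝ => u (y + s • e)) (fderiv ℝ u (y + t • e) e) t :=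
  (hu (y + t • e)).hasFDerivAt.comp_hasDerivAt t (line_hasDerivAt y e t)

lemma slice_second_hasDerivAt {u : EuclideanSpace ℝ (Fin m) → ℝ} (hu : ContDiff ℝ 2 u)
    (y e : EuclideanSpace ℝ (Fin m)) :
    HasDerivAt (fun t : ℝ => fderiv ℝ u (y + t • e) e)
      (fderiv ℝ (fun z => fderiv ℝ u z e) y e) 0 := by
  have hdf : Differentiable ℝ (fderiv ℝ u) :=
    (hu.fderiv_right (by norm_num : (1:WithTop ℕ∞) + 1 ≤ 2)).differentiable one_ne_zero
  have hF : Differentiable ℝ (fun z => fderiv ℝ u z e) :=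
    (ContinuousLinearMap.apply ℝ ℝ e).differentiable.comp hdf
  have h := (hF (y + (0:ℝ) • e)).hasFDerivAt.comp_hasDerivAt 0 (line_hasDerivAt y e 0)
  simp only [zero_smul, add_zero] at h; exact h

lemma wslice1 (lam c p0 : ℝ) (k : ℕ) (t : ℝ) (h : 0 < p0 - 2*c*t - t^2) :
    HasDerivAt (fun t : ℝ => lam * ((p0 - 2*c*t - t^2) ^ (k+1))⁻¹)
      (lam * ((k:ℝ)+1) * (2*c + 2*t) * ((p0 - 2*c*t - t^2) ^ (k+2))⁻¹) t := by
  have hP : HasDerivAt (fun t : ℝ => p0 - 2*c*t - t^2) (-(2*c) - 2*t) t := by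
    have h1 : HasDerivAt (fun t : ℝ => 2*c*t) (2*c) t := by
      simpa using (hasDerivAt_id t).const_mul (2*c)
    have h2 : HasDerivAt (fun t : ℝ => t^2) (2*t) t := by
      simpa using hasDerivAt_pow 2 t
    exact (((hasDerivAt_const t p0).sub h1).sub h2).congr_deriv (by ring)
  have hne : p0 - 2*c*t - t^2 ≠ 0 := ne_of_gt h
  have h3 := (((hP.pow (k+1)).inv (pow_ne_zero _ hne)).const_mul lam)
  refine h3.congr_deriv ?_
  have hne2 : (p0 - 2*c*t - t^2) ^ (k+2) ≠ 0 := pow_ne_zero _ hne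
  simp only [Pi.pow_apply, Nat.add_sub_cancel]; push_cast
  field_simp
  ring

lemma wslice2 (lam c p0 : ℝ) (k : ℕ) (hp0 : 0 < p0) :
    HasDerivAt (fun t : ℝ => lam * ((k:ℝ)+1) * (2*c + 2*t) * ((p0 - 2*c*t - t^2) ^ (k+2))⁻¹)
      (lam * ((k:ℝ)+1) * (2*p0 + ((k:ℝ)+2) * (2*c)^2) * (p0 ^ (k+3))⁻¹) 0 := by
  have hP : HasDerivAt (fun t : ℝ => p0 - 2*c*t - t^2) (-(2*c) - 2*(0:ℝ)) 0 := by
    have h1 : HasDerivAt (fun t : ℝ => 2*c*t) (2*c) (0:ℝ) := by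
      simpa using (hasDerivAt_id (0:ℝ)).const_mul (2*c)
    have h2 : HasDerivAt (fun t : ℝ => t^2) (2*(0:ℝ)) (0:ℝ) := by
      simpa using hasDerivAt_pow 2 (0:ℝ)
    exact (((hasDerivAt_const (0:ℝ) p0).sub h1).sub h2).congr_deriv (by ring)
  have hval : p0 - 2*c*(0:ℝ) - (0:ℝ)^2 = p0 := by ring
  have hne : p0 - 2*c*(0:ℝ) - (0:ℝ)^2 ≠ 0 := by rw [hval]; exact ne_of_gt hp0
  have hlin : HasDerivAt (fun t : ℝ => 2*c + 2*t) 2 (0:ℝ) := by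
    simpa using ((hasDerivAt_id (0:ℝ)).const_mul 2).const_add (2*c)
  have hinv := (hP.pow (k+2)).inv (pow_ne_zero _ hne)
  have hprod := hlin.mul hinv
  have h := hprod.const_mul (lam * ((k:ℝ)+1))
  have heq : (fun t : ℝ => lam * ((k:ℝ)+1) * ((2*c + 2*t) * ((p0 - 2*c*t - t^2) ^ (k+2))⁻¹))
      = (fun t : ℝ => lam * ((k:ℝ)+1) * (2*c + 2*t) * ((p0 - 2*c*t - t^2) ^ (k+2))⁻¹) := by
    funext t; ring
  rw [← heq]
  refine h.congr_deriv ?_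
  simp only [Pi.pow_apply, Pi.inv_apply, show k+2-1 = k+1 by omega]; push_cast
  rw [hval]
  have hne3 : p0 ^ (k+3) ≠ 0 := pow_ne_zero _ (ne_of_gt hp0)
  have hne2 : p0 ^ (k+2) ≠ 0 := pow_ne_zero _ (ne_of_gt hp0)
  field_simp
  ring

lemma Pslice (x0 y e : EuclideanSpace ℝ (Fin m)) (he : ‖e‖ = 1) (ρ t : ℝ) :
    ρ - ‖(y + t • e) - x0‖^2
      = (ρ - ‖y - x0‖^2) - 2*(inner ℝ (y - x0) e : ℝ)*t - t^2 := by
  have h1 : (y + t • e) - x0 = (y - x0) + t • e := by abel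
  rw [h1, norm_add_sq_real, real_inner_smul_right, norm_smul]
  simp [he, mul_pow, sq_abs]
  ring

lemma sum_coord_sq (v : EuclideanSpace ℝ (Fin m)) :
    ∑ i, (inner ℝ v (EuclideanSpace.single i (1:ℝ)) : ℝ)^2 = ‖v‖^2 := by
  have h1 : ∀ i, (inner ℝ v (EuclideanSpace.single i (1:ℝ)) : ℝ) = v i := by
    intro i
    rw [EuclideanSpace.inner_single_right]
    simp
  simp only [h1]
  rw [EuclideanSpace.norm_eq]
  rw [Real.sq_sqrt (by positivity)]
  congr 1; funext i; rw [Real.norm_eq_abs, sq_abs]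

end AuxLemmas

set_option maxHeartbeats 1000000 in
lemma key_estimate {m : ℕ} {σ : ℝ} (hσ : 1 < σ) (k : ℕ)
    (hk : 2 ≤ ((k:ℝ)+1)*(σ-1))
    (u b : EuclideanSpace ℝ (Fin m) → ℝ) (hu : ContDiff ℝ 2 u) (hupos : ∀ x, 0 ≤ u x)
    (hineq : ∀ x, b x * u x ^ σ ≤ euclideanLaplacian u x)
    (x0 : EuclideanSpace ℝ (Fin m)) (R QR : ℝ) (hR : 0 < R) (hQR : 0 < QR)
    (hbball : ∀ z, ‖z - x0‖ ≤ R → 1/QR ≤ b z) :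
    u x0 ^ (σ-1) ≤ (((k:ℝ)+1)*(2*m+4*((k:ℝ)+2))) * QR / R^2 := by
  have hσ1 : 0 < σ - 1 := by linarith
  set ρ := R^2 with hρdef
  have hρ0 : 0 < ρ := by positivity
  set δ : ℝ := ((k:ℝ)+1)*σ - ((k:ℝ)+3) with hδdef
  have hδ0 : 0 ≤ δ := by rw [hδdef]; nlinarith [hk]
  set K : ℝ := ((k:ℝ)+1)*(2*m+4*((k:ℝ)+2)) with hKdef
  have hK0 : 0 < K := by positivity
  have hρδ0 : 0 < ρ ^ δ := Real.rpow_pos_of_pos hρ0 δ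
  set Λ : ℝ := K * ρ * QR * ρ ^ δ with hΛdef
  have hΛ0 : 0 < Λ := by positivity
  set lam : ℝ := Λ ^ (σ-1)⁻¹ with hlamdef
  have hlam0 : 0 < lam := Real.rpow_pos_of_pos hΛ0 _
  set P : EuclideanSpace ℝ (Fin m) → ℝ := fun z => ρ - ‖z - x0‖^2 with hPdef
  have hPcont : Continuous P := by
    apply continuous_const.sub
    exact (continuous_id.sub continuous_const).norm.pow 2
  set w : EuclideanSpace ℝ (Fin m) → ℝ := fun z => lam * ((P z)^(k+1))⁻¹ with hwdef
  have hPx0 : P x0 = ρ := by simp [hPdef]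
  have hlamexp : lam ^ (σ - 1) = Λ := Real.rpow_inv_rpow hΛ0.le (ne_of_gt hσ1)
  -- main comparison claim
  have hfin : u x0 ≤ w x0 := by
    by_contra hgt
    push_neg at hgt
    -- supremum of u on the closed ball
    obtain ⟨z₀, hz₀, hz₀max⟩ := (isCompact_closedBall x0 R).exists_isMaxOn
        ⟨x0, by simp [hR.le]⟩ hu.continuous.continuousOn
    set Mu := u z₀ with hMudef
    have hMu0 : 0 ≤ Mu := hupos _
    set η : ℝ := min 1 (min (lam / (Mu+1)) ρ) with hηdef
    have hη0 : 0 < η := lt_min one_pos (lt_min (by positivity) hρ0)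
    have hηρ : η ≤ ρ := le_trans (min_le_right _ _) (min_le_right _ _)
    have hη1 : η ≤ 1 := min_le_left _ _
    have hηlam : η ≤ lam/(Mu+1) := le_trans (min_le_right _ _) (min_le_left _ _)
    have hwbig : ∀ z, 0 < P z → P z ≤ η → Mu + 1 ≤ w z := by
      intro z h1 h2
      have h3 : P z ^ (k+1) ≤ η ^ (k+1) := pow_le_pow_left₀ h1.le h2 _
      have h4 : η ^ (k+1) ≤ η := pow_le_of_le_one hη0.le hη1 (by omega)
      have h5 : P z ^ (k+1) ≤ lam / (Mu+1) := le_trans h3 (le_trans h4 hηlam)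
      have h6 : 0 < P z ^ (k+1) := pow_pos h1 _
      have h7 : P z ^ (k+1) * (Mu+1) ≤ lam := by
        rw [← le_div_iff₀ (by positivity)]; exact h5
      rw [hwdef]
      simp only []
      rw [show lam * (P z ^ (k+1))⁻¹ = lam / P z ^ (k+1) from (div_eq_mul_inv _ _).symm]
      rw [le_div_iff₀ h6, mul_comm]
      exact h7
    -- the compact set where P ≥ η
    set ρ' := Real.sqrt (ρ - η) with hρ'def
    have hSmem : ∀ z : EuclideanSpace ℝ (Fin m), z ∈ Metric.closedBall x0 ρ' ↔ η ≤ P z := by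
      intro z
      rw [Metric.mem_closedBall, dist_eq_norm]
      have hsq := Real.sq_sqrt (show (0:ℝ) ≤ ρ - η by linarith)
      constructor
      · intro h
        have h2 : ‖z - x0‖^2 ≤ ρ' ^ 2 := pow_le_pow_left₀ (norm_nonneg _) h 2
        rw [hρ'def, hsq] at h2
        rw [hPdef]; simp only []; linarith
      · intro h
        rw [hPdef] at h; simp only [] at h
        have h2 : ‖z - x0‖^2 ≤ ρ - η := by linarith
        rw [hρ'def]
        exact (Real.le_sqrt (norm_nonneg _) (by linarith)).mpr h2
    have hSsub : ∀ z : EuclideanSpace ℝ (Fin m), z ∈ Metric.closedBall x0 ρ' → ‖z - x0‖ ≤ R := by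
      intro z hz
      have h := (hSmem z).mp hz
      rw [hPdef] at h; simp only [] at h
      nlinarith [norm_nonneg (z - x0)]
    have hx0S : x0 ∈ Metric.closedBall x0 ρ' := (hSmem x0).mpr (by rw [hPx0]; exact hηρ)
    -- maximize u - w on the compact set
    have hwcontS : ContinuousOn w (Metric.closedBall x0 ρ') := by
      apply ContinuousOn.mul continuousOn_const
      apply ContinuousOn.inv₀ ((hPcont.pow (k+1)).continuousOn)
      intro z hz
      exact pow_ne_zero _ (ne_of_gt (lt_of_lt_of_le hη0 ((hSmem z).mp hz)))
    obtain ⟨y, hyS, hymax⟩ := (isCompact_closedBall x0 ρ').exists_isMaxOn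
        ⟨x0, hx0S⟩ (hu.continuous.continuousOn.sub hwcontS)
    have hyP : η ≤ P y := (hSmem y).mp hyS
    have hp0 : 0 < P y := lt_of_lt_of_le hη0 hyP
    have hydiff : 0 < u y - w y := by
      have h := hymax hx0S
      simp only [Set.mem_setOf_eq, Pi.sub_apply] at h
      linarith
    have hyMu : u y ≤ Mu := hz₀max (by
      rw [Metric.mem_closedBall, dist_eq_norm]; exact hSsub y hyS)
    have hPyη : η < P y := by
      rcases lt_or_eq_of_le hyP with h | h
      · exact h
      · exfalso
        have := hwbig y hp0 (le_of_eq h.symm)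
        linarith
    have hloc : IsLocalMax (fun z => u z - w z) y := by
      have hopen : IsOpen {z | η < P z} := isOpen_lt continuous_const hPcont
      have hmem : {z | η < P z} ∈ 𝓝 y := hopen.mem_nhds hPyη
      filter_upwards [hmem] with z hz
      exact hymax ((hSmem z).mpr (le_of_lt hz))
    set p0 := P y with hp0def
    have hsy : ‖y - x0‖^2 = ρ - p0 := by rw [hp0def, hPdef]; simp only []; ring
    have hp0ρ : p0 ≤ ρ := by linarith [hsy, sq_nonneg ‖y - x0‖]
    have hsρ : ‖y - x0‖^2 ≤ ρ := by linarith [hsy, hp0]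
    -- the per-coordinate second derivative comparison
    have hAB : ∀ i : Fin m,
        fderiv ℝ (fun z => fderiv ℝ u z (EuclideanSpace.single i 1)) y (EuclideanSpace.single i 1)
          ≤ lam * ((k:ℝ)+1) * (2*p0 + ((k:ℝ)+2)
              * (2*(inner ℝ (y - x0) (EuclideanSpace.single i (1:ℝ)) : ℝ))^2) * (p0 ^ (k+3))⁻¹ := by
      intro i
      set e := EuclideanSpace.single i (1:ℝ) with hedef
      have he : ‖e‖ = 1 := by rw [hedef, EuclideanSpace.norm_single]; norm_num
      set c : ℝ := inner ℝ (y - x0) e with hcdef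
      have hPs : ∀ t : ℝ, P (y + t • e) = p0 - 2*c*t - t^2 := by
        intro t
        rw [hPdef]
        simp only []
        rw [Pslice x0 y e he ρ t]
      set h : ℝ → ℝ := fun t => u (y + t • e) - lam * ((p0 - 2*c*t - t^2) ^ (k+1))⁻¹ with hhdef
      set h' : ℝ → ℝ := fun t =>
        fderiv ℝ u (y + t • e) e
          - lam * ((k:ℝ)+1) * (2*c + 2*t) * ((p0 - 2*c*t - t^2) ^ (k+2))⁻¹ with hh'def
      have hev : ∀ᶠ t in 𝓝 (0:ℝ), 0 < p0 - 2*c*t - t^2 := by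
        have hc : Continuous (fun t : ℝ => p0 - 2*c*t - t^2) :=
          (continuous_const.sub (continuous_const.mul continuous_id)).sub (continuous_pow 2)
        have hca : Tendsto (fun t : ℝ => p0 - 2*c*t - t^2) (𝓝 0) (𝓝 p0) := by
          have h1 := hc.continuousAt (x := (0:ℝ))
          rw [ContinuousAt] at h1
          convert h1 using 2
          norm_num
        exact hca.eventually (eventually_gt_nhds hp0)
      have hh : ∀ᶠ t in 𝓝 (0:ℝ), HasDerivAt h (h' t) t := by
        filter_upwards [hev] with t ht
        exact (slice_hasDerivAt (hu.differentiable (by norm_num)) y e t).sub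
          (wslice1 lam c p0 k t ht)
      have hd : HasDerivAt h' (fderiv ℝ (fun z => fderiv ℝ u z e) y e
          - lam * ((k:ℝ)+1) * (2*p0 + ((k:ℝ)+2)*(2*c)^2) * (p0 ^ (k+3))⁻¹) 0 :=
        (slice_second_hasDerivAt hu y e).sub (wslice2 lam c p0 k hp0)
      have hmaxh : IsLocalMax h 0 := by
        have htend : Tendsto (fun t : ℝ => y + t • e) (𝓝 0) (𝓝 y) := by
          have hcont : Continuous (fun t : ℝ => y + t • e) :=
            continuous_const.add (continuous_id.smul continuous_const)
          have h1 := hcont.continuousAt (x := (0:ℝ))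
          rw [ContinuousAt] at h1
          simpa using h1
        have hev2 := htend.eventually hloc
        have hwval : ∀ t : ℝ, w (y + t • e) = lam * ((p0 - 2*c*t - t^2) ^ (k+1))⁻¹ := by
          intro t; rw [hwdef]; simp only []; rw [hPs t]
        have h00 : h 0 = u y - w y := by
          rw [hhdef]
          simp only []
          rw [show y + (0:ℝ) • e = y by simp]
          rw [hwdef]
          simp only []
          rw [show p0 - 2*c*0 - 0^2 = P y from by rw [hp0def]; ring]
        rw [IsLocalMax, IsMaxFilter, h00]
        filter_upwards [hev2] with t ht
        rw [hhdef]
        simp only []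
        rw [← hwval t]
        exact ht
      have := second_deriv_nonpos_of_isLocalMax hh hd hmaxh
      linarith
    -- summation
    have hsum : euclideanLaplacian u y ≤ lam * K * ρ * (p0 ^ (k+3))⁻¹ := by
      have h1 := Finset.sum_le_sum (fun i (_ : i ∈ Finset.univ) => hAB i)
      rw [euclideanLaplacian]
      refine le_trans h1 ?_
      have h2 : ∀ i : Fin m, lam * ((k:ℝ)+1) * (2*p0 + ((k:ℝ)+2)
            * (2*(inner ℝ (y - x0) (EuclideanSpace.single i (1:ℝ)) : ℝ))^2) * (p0 ^ (k+3))⁻¹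
          = lam * ((k:ℝ)+1) * (p0 ^ (k+3))⁻¹ * (2*p0)
            + lam * ((k:ℝ)+1) * (p0 ^ (k+3))⁻¹ * (4*((k:ℝ)+2))
              * (inner ℝ (y - x0) (EuclideanSpace.single i (1:ℝ)) : ℝ)^2 := by
        intro i; ring
      rw [Finset.sum_congr rfl (fun i _ => h2 i)]
      rw [Finset.sum_add_distrib, Finset.sum_const, Finset.card_univ, Fintype.card_fin,
        ← Finset.mul_sum, sum_coord_sq]
      rw [hKdef]
      rw [nsmul_eq_mul]
      have hc1 : (0:ℝ) ≤ lam * ((k:ℝ)+1) * (p0 ^ (k+3))⁻¹ * 2 * (m:ℝ) := by positivity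
      have hc2 : (0:ℝ) ≤ lam * ((k:ℝ)+1) * (p0 ^ (k+3))⁻¹ * (4*((k:ℝ)+2)) := by positivity
      have hh1 := mul_le_mul_of_nonneg_left hp0ρ hc1
      have hh2 := mul_le_mul_of_nonneg_left hsρ hc2
      linarith [hh1, hh2]
    -- lower bound via the equation
    have hwy : w y = lam * (p0^(k+1))⁻¹ := by rw [hwdef]
    have hwy0 : 0 ≤ w y := by rw [hwy]; positivity
    have huy : w y < u y := by linarith
    have hrpow : w y ^ σ < u y ^ σ := Real.rpow_lt_rpow hwy0 huy (by linarith)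
    have hlow : lam * K * ρ * (p0 ^ (k+3))⁻¹ ≤ (1/QR) * (w y) ^ σ := by
      rw [hwy]
      rw [Real.mul_rpow hlam0.le (by positivity)]
      rw [Real.inv_rpow (by positivity)]
      rw [← Real.rpow_natCast p0 (k+1), ← Real.rpow_mul hp0.le]
      have hσsplit : σ = 1 + (σ - 1) := by ring
      have hlamσ : lam ^ σ = lam * Λ := by
        rw [show lam ^ σ = lam ^ (1 + (σ-1)) from by rw [← hσsplit]]
        rw [Real.rpow_add hlam0, Real.rpow_one, hlamexp]
      rw [hlamσ]
      have hexpeq : ((k+1 : ℕ) : ℝ) * σ = ((k:ℝ)+3) + δ := by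
        rw [hδdef]; push_cast; ring
      rw [hexpeq, Real.rpow_add hp0]
      have hnat : p0 ^ ((k:ℝ)+3) = p0 ^ (k+3) := by
        rw [show ((k:ℝ)+3) = ((k+3 : ℕ) : ℝ) by push_cast; ring, Real.rpow_natCast]
      rw [hnat]
      have hδle : p0 ^ δ ≤ ρ ^ δ := Real.rpow_le_rpow hp0.le hp0ρ hδ0
      have hδpos : 0 < p0 ^ δ := Real.rpow_pos_of_pos hp0 δ
      have hpk3 : (0:ℝ) < p0 ^ (k+3) := by positivity
      rw [hΛdef]
      rw [mul_inv]
      have hQRne : QR ≠ 0 := ne_of_gt hQR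
      have hgoal : lam * K * ρ * (p0 ^ (k+3))⁻¹ * (p0 ^ δ * QR)
          ≤ 1/QR * (lam * (K * ρ * QR * ρ ^ δ)) * ((p0 ^ (k+3))⁻¹ * (p0 ^ δ)⁻¹) * (p0 ^ δ * QR) := by
        have hlhs : lam * K * ρ * (p0 ^ (k+3))⁻¹ * (p0 ^ δ * QR)
            = (lam * K * ρ * (p0 ^ (k+3))⁻¹ * QR) * p0 ^ δ := by ring
        have hrhs : 1/QR * (lam * (K * ρ * QR * ρ ^ δ)) * ((p0 ^ (k+3))⁻¹ * (p0 ^ δ)⁻¹) * (p0 ^ δ * QR)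
            = (lam * K * ρ * (p0 ^ (k+3))⁻¹ * QR) * ρ ^ δ := by
          field_simp
        rw [hlhs, hrhs]
        exact mul_le_mul_of_nonneg_left hδle (by positivity)
      have hmulpos : (0:ℝ) < p0 ^ δ * QR := mul_pos hδpos hQR
      calc lam * K * ρ * (p0 ^ (k+3))⁻¹
          = lam * K * ρ * (p0 ^ (k+3))⁻¹ * (p0 ^ δ * QR) / (p0 ^ δ * QR) := by
            field_simp
      _ ≤ 1/QR * (lam * (K * ρ * QR * ρ ^ δ)) * ((p0 ^ (k+3))⁻¹ * (p0 ^ δ)⁻¹) * (p0 ^ δ * QR) / (p0 ^ δ * QR) := by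
            gcongr
      _ = 1/QR * (lam * (K * ρ * QR * ρ ^ δ) * ((p0 ^ (k+3))⁻¹ * (p0 ^ δ)⁻¹)) := by
            field_simp
    have hby : 1/QR ≤ b y := hbball y (hSsub y hyS)
    have hbu : (1/QR) * u y ^ σ ≤ euclideanLaplacian u y := by
      refine le_trans ?_ (hineq y)
      exact mul_le_mul_of_nonneg_right hby (Real.rpow_nonneg (hupos y) σ)
    have hstrict : (1/QR) * w y ^ σ < (1/QR) * u y ^ σ :=
      mul_lt_mul_of_pos_left hrpow (by positivity)
    linarith
  -- convert to the stated estimate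
  have h1 : u x0 ^ (σ-1) ≤ (lam * (ρ^(k+1))⁻¹) ^ (σ-1) := by
    apply Real.rpow_le_rpow (hupos x0) _ hσ1.le
    calc u x0 ≤ w x0 := hfin
    _ = lam * (ρ^(k+1))⁻¹ := by rw [hwdef]; simp only []; rw [hPx0]
  refine le_trans h1 (le_of_eq ?_)
  have hinv0 : (0:ℝ) ≤ (ρ^(k+1))⁻¹ := by positivity
  rw [Real.mul_rpow hlam0.le hinv0, hlamexp,
    Real.inv_rpow (by positivity), ← Real.rpow_natCast ρ (k+1),
    ← Real.rpow_mul hρ0.le]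
  have hexp : ((k:ℝ)+1) * (σ-1) = δ + 2 := by rw [hδdef]; push_cast; ring
  rw [show ((k+1 : ℕ) : ℝ) * (σ-1) = δ + 2 by push_cast; rw [hδdef]; ring]
  rw [Real.rpow_add hρ0, hΛdef]
  rw [show ρ ^ (2:ℝ) = ρ^(2:ℕ) by rw [← Real.rpow_natCast ρ 2]; norm_num]
  have : ρ^(2:ℕ) ≠ 0 := by positivity
  have hρδne : ρ ^ δ ≠ 0 := ne_of_gt hρδ0
  field_simp

theorem stmt7 {m : ℕ} (hm : 2 ≤ m) (σ : ℝ) (hσ : 1 < σ)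
    (Q : ℝ → ℝ)
    (hQpos : ∀ t > (0:ℝ), 0 < Q t)
    (hQmono : ∀ s t : ℝ, 0 < s → s ≤ t → Q s ≤ Q t)
    (hQo : Q =o[atTop] fun t => t ^ 2)
    (hliminf : ∃ C : ℝ, ∃ᶠ r in atTop, Q r * Real.log r / r ^ 2 ≤ C)
    (a b : EuclideanSpace ℝ (Fin m) → ℝ) (ha : Continuous a) (hb : Continuous b)
    (hbQ : ∀ x : EuclideanSpace ℝ (Fin m), 0 < ‖x‖ → 1 / Q ‖x‖ ≤ b x)
    (hapos : ∀ x, 0 ≤ a x)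
    (u : EuclideanSpace ℝ (Fin m) → ℝ) (hu : ContDiff ℝ 2 u)
    (hupos : ∀ x, 0 ≤ u x)
    (hineq : ∀ x, b x * u x ^ σ + a x * u x ≤ euclideanLaplacian u x) :
    ∀ x, u x = 0 := by
  intro x0
  by_contra hne
  have hx0 : 0 < u x0 := lt_of_le_of_ne (hupos x0) (Ne.symm hne)
  have hσ1 : 0 < σ - 1 := by linarith
  set k : ℕ := ⌈2 / (σ - 1)⌉₊ with hkdef
  have hk : 2 ≤ ((k:ℝ)+1)*(σ-1) := by
    have h1 : 2 / (σ - 1) ≤ (k:ℝ) := Nat.le_ceil _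
    have h2 : 2 / (σ - 1) ≤ (k:ℝ) + 1 := by linarith
    calc (2:ℝ) = 2 / (σ-1) * (σ-1) := by field_simp
    _ ≤ ((k:ℝ)+1) * (σ-1) := mul_le_mul_of_nonneg_right h2 hσ1.le
  have hineq' : ∀ z, b z * u z ^ σ ≤ euclideanLaplacian u z := by
    intro z
    have h1 := hineq z
    have h2 : 0 ≤ a z * u z := mul_nonneg (hapos z) (hupos z)
    linarith
  -- b is bounded below on balls, including at the origin by continuity
  haveI : Nontrivial (EuclideanSpace ℝ (Fin m)) := by
    have h1 : ‖EuclideanSpace.single (⟨0, by omega⟩ : Fin m) (1:ℝ)‖ = 1 := by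
      rw [EuclideanSpace.norm_single]; norm_num
    refine nontrivial_of_ne (EuclideanSpace.single (⟨0, by omega⟩ : Fin m) (1:ℝ)) 0 fun h => ?_
    rw [h, norm_zero] at h1
    norm_num at h1
  have hb0 : ∀ r : ℝ, 0 < r → 1 / Q r ≤ b 0 := by
    intro r hr
    have htend : Tendsto b (𝓝[≠] (0 : EuclideanSpace ℝ (Fin m))) (𝓝 (b 0)) :=
      (hb.tendsto 0).mono_left nhdsWithin_le_nhds
    have hball : ∀ᶠ z in 𝓝 (0 : EuclideanSpace ℝ (Fin m)), ‖z‖ < r := by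
      have := Metric.ball_mem_nhds (0 : EuclideanSpace ℝ (Fin m)) hr
      filter_upwards [this] with z hz
      simpa [dist_eq_norm] using hz
    have hev : ∀ᶠ z in 𝓝[≠] (0 : EuclideanSpace ℝ (Fin m)), 1 / Q r ≤ b z := by
      filter_upwards [hball.filter_mono nhdsWithin_le_nhds, self_mem_nhdsWithin] with z hz hz0
      have hz0' : 0 < ‖z‖ := norm_pos_iff.mpr hz0
      calc 1 / Q r ≤ 1 / Q ‖z‖ :=
        one_div_le_one_div_of_le (hQpos _ hz0') (hQmono _ _ hz0' hz.le)
      _ ≤ b z := hbQ z hz0'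
    exact ge_of_tendsto htend hev
  have hbball : ∀ R : ℝ, 0 < R → ∀ z : EuclideanSpace ℝ (Fin m),
      ‖z - x0‖ ≤ R → 1 / Q (‖x0‖ + R) ≤ b z := by
    intro R hR z hz
    have hxR : 0 < ‖x0‖ + R := by positivity
    rcases eq_or_lt_of_le (norm_nonneg z) with h0 | h0
    · have hz0 : z = 0 := norm_eq_zero.mp h0.symm
      rw [hz0]
      exact hb0 _ hxR
    · have hzle : ‖z‖ ≤ ‖x0‖ + R := by
        have := norm_sub_norm_le z x0
        have h2 : ‖z‖ - ‖x0‖ ≤ R := le_trans this hz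
        linarith
      calc 1 / Q (‖x0‖ + R) ≤ 1 / Q ‖z‖ :=
        one_div_le_one_div_of_le (hQpos _ h0) (hQmono _ _ h0 hzle)
      _ ≤ b z := hbQ z h0
  set K : ℝ := ((k:ℝ)+1)*(2*m+4*((k:ℝ)+2)) with hKdef
  have key : ∀ R : ℝ, 0 < R → u x0 ^ (σ-1) ≤ K * Q (‖x0‖ + R) / R^2 := by
    intro R hR
    exact key_estimate hσ k hk u b hu hupos hineq' x0 R (Q (‖x0‖ + R)) hR
      (hQpos _ (by positivity)) (hbball R hR)
  -- limit as R → ∞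
  have hlim : Tendsto (fun R : ℝ => K * Q (‖x0‖ + R) / R^2) atTop (𝓝 0) := by
    have h1 : (fun R : ℝ => Q (‖x0‖ + R)) =o[atTop] (fun R : ℝ => (‖x0‖ + R)^2) :=
      hQo.comp_tendsto (tendsto_atTop_add_const_left _ _ tendsto_id)
    have h2 : (fun R : ℝ => (‖x0‖ + R)^2) =O[atTop] (fun R : ℝ => R^2) := by
      rw [Asymptotics.isBigO_iff]
      refine ⟨4, ?_⟩
      filter_upwards [eventually_ge_atTop ‖x0‖, eventually_ge_atTop (0:ℝ)] with R h3 h4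
      rw [Real.norm_eq_abs, Real.norm_eq_abs, abs_of_nonneg (by positivity),
        abs_of_nonneg (by positivity)]
      nlinarith [norm_nonneg x0]
    have h3 := (h1.trans_isBigO h2).tendsto_div_nhds_zero
    have h4 := h3.const_mul K
    rw [mul_zero] at h4
    refine h4.congr (fun R => ?_)
    ring
  have hle : u x0 ^ (σ-1) ≤ 0 := by
    refine ge_of_tendsto hlim ?_
    filter_upwards [eventually_gt_atTop (0:ℝ)] with R hR
    exact key R hR
  have : 0 < u x0 ^ (σ-1) := Real.rpow_pos_of_pos hx0 _
  linarith
end
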